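/- arXiv:1010.5578 — 6 statements merged into one kernel-verified Lean document; each statement's English description precedes it below -/
import Mathlib

section
/- Let O ⊆ ℝⁿ be an open set, let σ : O → ℝ be twice continuously differentiable with σ(x) > 0 for every x ∈ O, and let u : O → ℂ be twice continuously differentiable. Then for every x ∈ O one has the gauge-transformation identity σ(x)^{-1/2} · ∑_{i=1}^n ∂_i( σ · ∂_i( σ^{-1/2} u ) )(x) = Δu(x) − ( σ(x)^{-1/2} · Δ(σ^{1/2})(x) ) · u(x), where ∂_i denotes the partial derivative in the i-th standard coordinate direction and Δ = ∑_{i=1}^n ∂_i∂_i is the Euclidean Laplacian. -/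
open scoped BigOperators

/-- Partial derivative of a complex-valued function on `ℝⁿ` in the `i`-th standard
coordinate direction. -/
noncomputable def pdC {n : ℕ} (i : Fin n) (f : EuclideanSpace ℝ (Fin n) → ℂ)
    (x : EuclideanSpace ℝ (Fin n)) : ℂ :=
  fderiv ℝ f x (EuclideanSpace.single i 1)

/-- Partial derivative of a real-valued function on `ℝⁿ` in the `i`-th standard
coordinate direction. -/
noncomputable def pdR {n : ℕ} (i : Fin n) (f : EuclideanSpace ℝ (Fin n) → ℝ)
    (x : EuclideanSpace ℝ (Fin n)) : ℝ :=
  fderiv ℝ f x (EuclideanSpace.single i 1)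

/-- Euclidean Laplacian of a complex-valued function. -/
noncomputable def lapC {n : ℕ} (f : EuclideanSpace ℝ (Fin n) → ℂ)
    (x : EuclideanSpace ℝ (Fin n)) : ℂ :=
  ∑ i : Fin n, pdC i (fun y => pdC i f y) x

/-- Euclidean Laplacian of a real-valued function. -/
noncomputable def lapR {n : ℕ} (f : EuclideanSpace ℝ (Fin n) → ℝ)
    (x : EuclideanSpace ℝ (Fin n)) : ℝ :=
  ∑ i : Fin n, pdR i (fun y => pdR i f y) x

lemma pdC_def {n : ℕ} (i : Fin n) (f : EuclideanSpace ℝ (Fin n) → ℂ) (x) :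
    pdC i f x = fderiv ℝ f x (EuclideanSpace.single i 1) := rfl

lemma pdR_def {n : ℕ} (i : Fin n) (f : EuclideanSpace ℝ (Fin n) → ℝ) (x) :
    pdR i f x = fderiv ℝ f x (EuclideanSpace.single i 1) := rfl

lemma diffAt_ofReal {n : ℕ} {f : EuclideanSpace ℝ (Fin n) → ℝ} {x}
    (hf : DifferentiableAt ℝ f x) :
    DifferentiableAt ℝ (fun z => ((f z : ℝ) : ℂ)) x :=
  Complex.ofRealCLM.differentiableAt.comp x hf

lemma pd_ofReal {n : ℕ} (i : Fin n) {f : EuclideanSpace ℝ (Fin n) → ℝ} {x}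
    (hf : DifferentiableAt ℝ f x) :
    pdC i (fun z => ((f z : ℝ) : ℂ)) x = ((pdR i f x : ℝ) : ℂ) := by
  have h : HasFDerivAt (fun z => ((f z : ℝ) : ℂ))
      (Complex.ofRealCLM.comp (fderiv ℝ f x)) x :=
    Complex.ofRealCLM.hasFDerivAt.comp x hf.hasFDerivAt
  rw [pdC_def, h.fderiv]
  rfl

lemma pdC_mul {n : ℕ} (i : Fin n) {f : EuclideanSpace ℝ (Fin n) → ℝ}
    {v : EuclideanSpace ℝ (Fin n) → ℂ} {x}
    (hf : DifferentiableAt ℝ f x) (hv : DifferentiableAt ℝ v x) :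
    pdC i (fun z => ((f z : ℝ) : ℂ) * v z) x
      = ((f x : ℝ) : ℂ) * pdC i v x + ((pdR i f x : ℝ) : ℂ) * v x := by
  have hfc := diffAt_ofReal hf
  rw [pdC_def, fderiv_fun_mul hfc hv]
  simp only [ContinuousLinearMap.add_apply, ContinuousLinearMap.smul_apply, smul_eq_mul]
  rw [← pdC_def, ← pdC_def, pd_ofReal i hf]
  ring

lemma diffAt_pdC {n : ℕ} (i : Fin n) {f : EuclideanSpace ℝ (Fin n) → ℂ} {x}
    (hf : ContDiffAt ℝ 2 f x) :
    DifferentiableAt ℝ (fun y => pdC i f y) x := by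
  have h := hf.fderiv_right (m := 1) (by norm_num)
  have h2 := h.clm_apply (contDiffAt_const (c := EuclideanSpace.single i (1:ℝ)))
  exact h2.differentiableAt one_ne_zero

lemma diffAt_pdR {n : ℕ} (i : Fin n) {f : EuclideanSpace ℝ (Fin n) → ℝ} {x}
    (hf : ContDiffAt ℝ 2 f x) :
    DifferentiableAt ℝ (fun y => pdR i f y) x := by
  have h := hf.fderiv_right (m := 1) (by norm_num)
  have h2 := h.clm_apply (contDiffAt_const (c := EuclideanSpace.single i (1:ℝ)))
  exact h2.differentiableAt one_ne_zero

lemma pdR_inv {n : ℕ} (i : Fin n) {s : EuclideanSpace ℝ (Fin n) → ℝ} {y}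
    (hs : DifferentiableAt ℝ s y) (hne : s y ≠ 0) :
    pdR i (fun z => (s z)⁻¹) y = -(s y ^ 2)⁻¹ * pdR i s y := by
  have h : HasFDerivAt (fun z => (s z)⁻¹)
      ((ContinuousLinearMap.smulRight (1 : ℝ →L[ℝ] ℝ) (-(s y ^ 2)⁻¹)).comp (fderiv ℝ s y)) y :=
    (hasFDerivAt_inv hne).comp y hs.hasFDerivAt
  rw [pdR_def, h.fderiv]
  simp [pdR_def, mul_comm]

/-- The gauge transformation identity
`σ^{-1/2} ∑ᵢ ∂ᵢ(σ ∂ᵢ(σ^{-1/2} u)) = Δu − (σ^{-1/2} Δ(σ^{1/2})) u` on an open set. -/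
theorem gauge_transformation_identity
    {n : ℕ} (O : Set (EuclideanSpace ℝ (Fin n))) (hO : IsOpen O)
    (σ : EuclideanSpace ℝ (Fin n) → ℝ) (u : EuclideanSpace ℝ (Fin n) → ℂ)
    (hσ : ContDiffOn ℝ 2 σ O) (hσpos : ∀ x ∈ O, 0 < σ x)
    (hu : ContDiffOn ℝ 2 u O) :
    ∀ x ∈ O,
      ((Real.sqrt (σ x))⁻¹ : ℂ) *
          ∑ i : Fin n,
            pdC i (fun y => ((σ y : ℝ) : ℂ) *
              pdC i (fun z => (((Real.sqrt (σ z))⁻¹ : ℝ) : ℂ) * u z) y) x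
        = lapC u x -
            ((((Real.sqrt (σ x))⁻¹ * lapR (fun y => Real.sqrt (σ y)) x : ℝ)) : ℂ) * u x := by
  intro x hx
  set s : EuclideanSpace ℝ (Fin n) → ℝ := fun y => Real.sqrt (σ y) with hs_def
  have hne : ∀ y ∈ O, s y ≠ 0 := fun y hy => Real.sqrt_ne_zero'.mpr (hσpos y hy)
  have hsq : ∀ y ∈ O, σ y = s y ^ 2 := fun y hy => (Real.sq_sqrt (hσpos y hy).le).symm
  have hσc : ∀ y ∈ O, ContDiffAt ℝ 2 σ y := fun y hy => (hσ y hy).contDiffAt (hO.mem_nhds hy)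
  have hsc : ∀ y ∈ O, ContDiffAt ℝ 2 s y := fun y hy => (hσc y hy).sqrt (hσpos y hy).ne'
  have huc : ∀ y ∈ O, ContDiffAt ℝ 2 u y := fun y hy => (hu y hy).contDiffAt (hO.mem_nhds hy)
  have hsd : ∀ y ∈ O, DifferentiableAt ℝ s y :=
    fun y hy => (hsc y hy).differentiableAt two_ne_zero
  have hud : ∀ y ∈ O, DifferentiableAt ℝ u y :=
    fun y hy => (huc y hy).differentiableAt two_ne_zero
  have hgd : ∀ y ∈ O, DifferentiableAt ℝ (fun z => (s z)⁻¹) y :=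
    fun y hy => (hsd y hy).inv (hne y hy)
  -- step 1: pointwise identity on O for the inner expression
  have hFG : ∀ i : Fin n, ∀ y ∈ O,
      ((σ y : ℝ) : ℂ) * pdC i (fun z => (((s z)⁻¹ : ℝ) : ℂ) * u z) y
        = ((s y : ℝ) : ℂ) * pdC i u y - ((pdR i s y : ℝ) : ℂ) * u y := by
    intro i y hy
    rw [pdC_mul i (hgd y hy) (hud y hy), pdR_inv i (hsd y hy) (hne y hy), hsq y hy]
    have ha : ((s y : ℝ) : ℂ) ≠ 0 := Complex.ofReal_ne_zero.mpr (hne y hy)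
    push_cast
    field_simp
    ring
  -- step 2: differentiate the identity at x
  have key : ∀ i : Fin n,
      pdC i (fun y => ((σ y : ℝ) : ℂ) * pdC i (fun z => (((s z)⁻¹ : ℝ) : ℂ) * u z) y) x
        = ((s x : ℝ) : ℂ) * pdC i (fun y => pdC i u y) x
          - ((pdR i (fun y => pdR i s y) x : ℝ) : ℂ) * u x := by
    intro i
    have heq : (fun y => ((σ y : ℝ) : ℂ) * pdC i (fun z => (((s z)⁻¹ : ℝ) : ℂ) * u z) y)
        =ᶠ[nhds x] (fun y => ((s y : ℝ) : ℂ) * pdC i u y - ((pdR i s y : ℝ) : ℂ) * u y) :=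
      Filter.eventuallyEq_of_mem (hO.mem_nhds hx) (fun y hy => hFG i y hy)
    have hrw : pdC i (fun y => ((σ y : ℝ) : ℂ) * pdC i (fun z => (((s z)⁻¹ : ℝ) : ℂ) * u z) y) x
        = pdC i (fun y => ((s y : ℝ) : ℂ) * pdC i u y - ((pdR i s y : ℝ) : ℂ) * u y) x := by
      rw [pdC_def, pdC_def, heq.fderiv_eq]
    rw [hrw]
    have hA : DifferentiableAt ℝ (fun y => ((s y : ℝ) : ℂ) * pdC i u y) x :=
      (diffAt_ofReal (hsd x hx)).mul (diffAt_pdC i (huc x hx))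
    have hB : DifferentiableAt ℝ (fun y => ((pdR i s y : ℝ) : ℂ) * u y) x :=
      (diffAt_ofReal (diffAt_pdR i (hsc x hx))).mul (hud x hx)
    have hsub : pdC i (fun y => ((s y : ℝ) : ℂ) * pdC i u y - ((pdR i s y : ℝ) : ℂ) * u y) x
        = pdC i (fun y => ((s y : ℝ) : ℂ) * pdC i u y) x
          - pdC i (fun y => ((pdR i s y : ℝ) : ℂ) * u y) x := by
      rw [pdC_def, fderiv_fun_sub hA hB]
      simp [pdC_def]
    rw [hsub, pdC_mul i (hsd x hx) (diffAt_pdC i (huc x hx)),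
      pdC_mul i (diffAt_pdR i (hsc x hx)) (hud x hx)]
    ring
  -- step 3: assemble
  have hsum : (∑ i : Fin n,
      pdC i (fun y => ((σ y : ℝ) : ℂ) * pdC i (fun z => (((s z)⁻¹ : ℝ) : ℂ) * u z) y) x)
      = ((s x : ℝ) : ℂ) * lapC u x - ((lapR s x : ℝ) : ℂ) * u x := by
    rw [Finset.sum_congr rfl (fun i _ => key i)]
    rw [Finset.sum_sub_distrib, ← Finset.mul_sum, ← Finset.sum_mul]
    simp only [lapC, lapR]
    push_cast
    ring
  have ha : ((s x : ℝ) : ℂ) ≠ 0 := Complex.ofReal_ne_zero.mpr (hne x hx)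
  rw [hsum]
  push_cast
  simp only [show Real.sqrt (σ x) = s x from rfl]
  field_simp
end

section
/- Let Ω, Ω̃ ⊆ ℝⁿ be open sets and F : Ω → Ω̃ a bijective, continuously differentiable map with continuously differentiable inverse, whose Jacobian matrix M(x) = DF(x) has J(x) = det M(x) > 0 for all x ∈ Ω. Let σ : Ω → (n×n real matrices) and η : Ω → ℝ be continuous, let u : Ω → ℂ be continuously differentiable, and let ω ∈ ℝ. Define the push-forwards on Ω̃ by ũ(F(x)) = u(x), σ̃(F(x)) = J(x)^{-1} M(x) σ(x) M(x)ᵀ, and η̃(F(x)) = η(x)/J(x). Then for every continuously differentiable φ : Ω̃ → ℂ with compact support contained in Ω̃, ∫_{Ω̃} [ ∑_{i,j=1}^n σ̃^{ij}(x̃) ∂_j ũ(x̃) ∂_i φ(x̃) − ω² η̃(x̃) ũ(x̃) φ(x̃) ] dx̃ = ∫_{Ω} [ ∑_{i,j=1}^n σ^{ij}(x) ∂_j u(x) ∂_i(φ∘F)(x) − ω² η(x) u(x) φ(F(x)) ] dx. -/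
open scoped BigOperators
open MeasureTheory Matrix

lemma clm_expand {n : ℕ} (L : EuclideanSpace ℝ (Fin n) →L[ℝ] ℂ)
    (v : EuclideanSpace ℝ (Fin n)) :
    L v = ∑ i, ((v i : ℝ) : ℂ) * L (EuclideanSpace.single i 1) := by
  conv_lhs => rw [← (EuclideanSpace.basisFun (Fin n) ℝ).sum_repr v]
  rw [map_sum]
  simp [EuclideanSpace.basisFun_repr, EuclideanSpace.basisFun_apply, Complex.real_smul]

lemma det_clm_eq {n : ℕ} (L : EuclideanSpace ℝ (Fin n) →L[ℝ] EuclideanSpace ℝ (Fin n))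
    (A : Matrix (Fin n) (Fin n) ℝ)
    (hA : ∀ i j, A i j = L (EuclideanSpace.single j 1) i) :
    L.det = A.det := by
  have h := LinearMap.det_toMatrix (ι := Fin n) (M := EuclideanSpace ℝ (Fin n)) (A := ℝ)
    (EuclideanSpace.basisFun (Fin n) ℝ).toBasis L.toLinearMap
  rw [ContinuousLinearMap.det, ← h]
  congr 1
  ext i j
  rw [LinearMap.toMatrix_apply, hA]
  simp [OrthonormalBasis.coe_toBasis, OrthonormalBasis.coe_toBasis_repr_apply,
    EuclideanSpace.basisFun_apply, EuclideanSpace.basisFun_repr]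

lemma matrix_sum_lemma {n : ℕ} (m s : Matrix (Fin n) (Fin n) ℝ) (a b : Fin n → ℂ) :
    ∑ i, ∑ j, (((m * s * mᵀ) i j : ℝ) : ℂ) * a j * b i
      = ∑ i, ∑ j, ((s i j : ℝ) : ℂ) * (∑ k, ((m k j : ℝ) : ℂ) * a k)
          * (∑ l, ((m l i : ℝ) : ℂ) * b l) := by
  have key : ∀ (mc sc : Matrix (Fin n) (Fin n) ℂ),
      ∑ i, ∑ j, (mc * sc * mcᵀ) i j * a j * b i
        = ∑ i, ∑ j, sc i j * (∑ k, mc k j * a k) * (∑ l, mc l i * b l) := by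
    intro mc sc
    have h1 : ∑ i, ∑ j, (mc * sc * mcᵀ) i j * a j * b i
        = b ⬝ᵥ ((mc * sc * mcᵀ) *ᵥ a) := by
      simp only [dotProduct, mulVec, Finset.mul_sum]
      apply Finset.sum_congr rfl; intro i _
      apply Finset.sum_congr rfl; intro j _; ring
    have h2 : ∑ i, ∑ j, sc i j * (∑ k, mc k j * a k) * (∑ l, mc l i * b l)
        = (mcᵀ *ᵥ b) ⬝ᵥ (sc *ᵥ (mcᵀ *ᵥ a)) := by
      simp only [dotProduct, mulVec, transpose_apply, Finset.mul_sum, Finset.sum_mul]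
      apply Finset.sum_congr rfl; intro i _
      apply Finset.sum_congr rfl; intro j _
      rw [Finset.sum_comm]
      apply Finset.sum_congr rfl; intro k _
      apply Finset.sum_congr rfl; intro l _; ring
    rw [h1, h2, ← mulVec_mulVec, ← mulVec_mulVec, dotProduct_mulVec b,
      ← mulVec_transpose]
  calc ∑ i, ∑ j, (((m * s * mᵀ) i j : ℝ) : ℂ) * a j * b i
      = ∑ i, ∑ j, (m.map (Complex.ofReal) * s.map (Complex.ofReal)
          * (m.map (Complex.ofReal))ᵀ) i j * a j * b i := by
        apply Finset.sum_congr rfl; intro i _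
        apply Finset.sum_congr rfl; intro j _
        congr 1; congr 1
        simp only [Matrix.mul_apply, Matrix.map_apply, Matrix.transpose_apply]
        push_cast; rfl
    _ = _ := by
        rw [key]
        simp [Matrix.map_apply]

/-- Weak-form transformation invariance of the heterogeneous Helmholtz equation:
for a `C¹` diffeomorphism `F : Ω → Ω̃` with positive Jacobian determinant, the
push-forwarded fields `ũ = u∘F⁻¹`, `σ̃ = J⁻¹ M σ Mᵀ`, `η̃ = η/J` satisfy, for every
`C¹` test function `φ` compactly supported in `Ω̃`,
`∫_{Ω̃} [∑ σ̃ij ∂jũ ∂iφ − ω²η̃ũφ] = ∫_Ω [∑ σij ∂ju ∂i(φ∘F) − ω²ηu (φ∘F)]`. -/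
theorem helmholtz_transformation_invariance
    {n : ℕ} (Ω Ω' : Set (EuclideanSpace ℝ (Fin n))) (hΩ : IsOpen Ω) (hΩ' : IsOpen Ω')
    (F G : EuclideanSpace ℝ (Fin n) → EuclideanSpace ℝ (Fin n))
    (hFbij : Set.BijOn F Ω Ω')
    (hFdiff : ContDiffOn ℝ 1 F Ω) (hGdiff : ContDiffOn ℝ 1 G Ω')
    (hGF : ∀ x ∈ Ω, G (F x) = x) (hFG : ∀ y ∈ Ω', F (G y) = y)
    (M : EuclideanSpace ℝ (Fin n) → Matrix (Fin n) (Fin n) ℝ)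
    (hM : ∀ x ∈ Ω, ∀ i j, M x i j = fderiv ℝ F x (EuclideanSpace.single j 1) i)
    (hJ : ∀ x ∈ Ω, 0 < (M x).det)
    (σ : EuclideanSpace ℝ (Fin n) → Matrix (Fin n) (Fin n) ℝ)
    (η : EuclideanSpace ℝ (Fin n) → ℝ)
    (hσ : ContinuousOn σ Ω) (hη : ContinuousOn η Ω)
    (u : EuclideanSpace ℝ (Fin n) → ℂ) (hu : ContDiffOn ℝ 1 u Ω) (ω : ℝ)
    (u' : EuclideanSpace ℝ (Fin n) → ℂ)
    (σ' : EuclideanSpace ℝ (Fin n) → Matrix (Fin n) (Fin n) ℝ)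
    (η' : EuclideanSpace ℝ (Fin n) → ℝ)
    (hu' : ∀ x ∈ Ω, u' (F x) = u x)
    (hσ' : ∀ x ∈ Ω, σ' (F x) = ((M x).det)⁻¹ • (M x * σ x * (M x)ᵀ))
    (hη' : ∀ x ∈ Ω, η' (F x) = η x / (M x).det)
    (φ : EuclideanSpace ℝ (Fin n) → ℂ)
    (hφ : ContDiff ℝ 1 φ) (hφsupp : HasCompactSupport φ)
    (hφsub : tsupport φ ⊆ Ω') :
    (∫ y in Ω', (∑ i : Fin n, ∑ j : Fin n,
          ((σ' y i j : ℝ) : ℂ) * pdC j u' y * pdC i φ y)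
        - ((ω ^ 2 * η' y : ℝ) : ℂ) * u' y * φ y)
      = ∫ x in Ω, (∑ i : Fin n, ∑ j : Fin n,
          ((σ x i j : ℝ) : ℂ) * pdC j u x * pdC i (fun z => φ (F z)) x)
        - ((ω ^ 2 * η x : ℝ) : ℂ) * u x * φ (F x) := by
  classical
  have hΩm : MeasurableSet Ω := hΩ.measurableSet
  have himg : F '' Ω = Ω' := hFbij.image_eq
  have hGmem : ∀ y ∈ Ω', G y ∈ Ω := by
    intro y hy
    obtain ⟨x, hx, rfl⟩ := hFbij.surjOn hy
    rw [hGF x hx]; exact hx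
  have hu'eq : ∀ y ∈ Ω', u' y = u (G y) := by
    intro y hy
    have h1 := hu' (G y) (hGmem y hy)
    rwa [hFG y hy] at h1
  -- derivative of F within Ω
  have hFd : ∀ x ∈ Ω, HasFDerivWithinAt F (fderiv ℝ F x) Ω x := by
    intro x hx
    exact (((hFdiff.contDiffAt (hΩ.mem_nhds hx)).differentiableAt
      one_ne_zero).hasFDerivAt).hasFDerivWithinAt
  have cov := integral_image_eq_integral_abs_det_fderiv_smul volume hΩm hFd hFbij.injOn
    (fun y => (∑ i : Fin n, ∑ j : Fin n,
          ((σ' y i j : ℝ) : ℂ) * pdC j u' y * pdC i φ y)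
        - ((ω ^ 2 * η' y : ℝ) : ℂ) * u' y * φ y)
  rw [← himg, cov]
  apply setIntegral_congr_fun hΩm
  intro x hx
  simp only
  -- basic differentiability facts at x
  have hFx : F x ∈ Ω' := hFbij.mapsTo hx
  have hFdx : DifferentiableAt ℝ F x :=
    (hFdiff.contDiffAt (hΩ.mem_nhds hx)).differentiableAt one_ne_zero
  have hudx : DifferentiableAt ℝ u x :=
    (hu.contDiffAt (hΩ.mem_nhds hx)).differentiableAt one_ne_zero
  have hGdx : DifferentiableAt ℝ G (F x) :=
    (hGdiff.contDiffAt (hΩ'.mem_nhds hFx)).differentiableAt one_ne_zero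
  have hu'ev : u' =ᶠ[nhds (F x)] fun y => u (G y) :=
    Filter.eventuallyEq_of_mem (hΩ'.mem_nhds hFx) (fun y hy => hu'eq y hy)
  have huGx : DifferentiableAt ℝ (fun y => u (G y)) (F x) := by
    have : DifferentiableAt ℝ u (G (F x)) := by rw [hGF x hx]; exact hudx
    exact this.comp (F x) hGdx
  have hu'dx : DifferentiableAt ℝ u' (F x) := huGx.congr_of_eventuallyEq hu'ev
  have hφdx : DifferentiableAt ℝ φ (F x) := (hφ.differentiable one_ne_zero) (F x)
  -- chain rules
  have huev : u =ᶠ[nhds x] fun z => u' (F z) :=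
    Filter.eventuallyEq_of_mem (hΩ.mem_nhds hx) (fun z hz => (hu' z hz).symm)
  have hchain_u : fderiv ℝ u x = (fderiv ℝ u' (F x)).comp (fderiv ℝ F x) := by
    rw [huev.fderiv_eq]
    exact fderiv_comp x hu'dx hFdx
  have hchain_φ : fderiv ℝ (fun z => φ (F z)) x
      = (fderiv ℝ φ (F x)).comp (fderiv ℝ F x) := fderiv_comp x hφdx hFdx
  -- pdC expansions
  have hpu : ∀ j, pdC j u x = ∑ k, ((M x k j : ℝ) : ℂ) * pdC k u' (F x) := by
    intro j
    rw [pdC, hchain_u, ContinuousLinearMap.comp_apply,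
      clm_expand (fderiv ℝ u' (F x)) (fderiv ℝ F x (EuclideanSpace.single j 1))]
    apply Finset.sum_congr rfl; intro k _
    rw [← hM x hx k j]; rfl
  have hpφ : ∀ i, pdC i (fun z => φ (F z)) x
      = ∑ l, ((M x l i : ℝ) : ℂ) * pdC l φ (F x) := by
    intro i
    rw [pdC, hchain_φ, ContinuousLinearMap.comp_apply,
      clm_expand (fderiv ℝ φ (F x)) (fderiv ℝ F x (EuclideanSpace.single i 1))]
    apply Finset.sum_congr rfl; intro l _
    rw [← hM x hx l i]; rfl
  -- determinant
  have hdet : (fderiv ℝ F x).det = (M x).det :=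
    det_clm_eq _ _ (fun i j => hM x hx i j)
  have hJx : (0:ℝ) < (M x).det := hJ x hx
  rw [hdet, abs_of_pos hJx]
  rw [Complex.real_smul]
  set J : ℝ := (M x).det with hJdef
  have hJne : (J:ℂ) ≠ 0 := by
    simp [hJdef]
    exact_mod_cast ne_of_gt hJx
  -- rewrite pushforward fields
  rw [hσ' x hx, hη' x hx, hu' x hx]
  -- split the two parts
  rw [mul_sub]
  congr 1
  · -- sum part
    rw [Finset.mul_sum]
    simp only [Finset.mul_sum]
    calc ∑ i, ∑ j, (J:ℂ) * (((((M x).det⁻¹ • (M x * σ x * (M x)ᵀ)) i j : ℝ):ℂ)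
            * pdC j u' (F x) * pdC i φ (F x))
        = ∑ i, ∑ j, (((M x * σ x * (M x)ᵀ) i j : ℝ):ℂ)
            * pdC j u' (F x) * pdC i φ (F x) := by
          apply Finset.sum_congr rfl; intro i _
          apply Finset.sum_congr rfl; intro j _
          have he : (((M x).det⁻¹ • (M x * σ x * (M x)ᵀ)) i j : ℝ)
              = J⁻¹ * ((M x * σ x * (M x)ᵀ) i j) := by
            simp [Matrix.smul_apply, hJdef]
          rw [he]
          push_cast
          field_simp
      _ = ∑ i, ∑ j, ((σ x i j : ℝ):ℂ)
            * (∑ k, ((M x k j : ℝ):ℂ) * pdC k u' (F x))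
            * (∑ l, ((M x l i : ℝ):ℂ) * pdC l φ (F x)) :=
          matrix_sum_lemma (M x) (σ x) (fun k => pdC k u' (F x)) (fun l => pdC l φ (F x))
      _ = ∑ i, ∑ j, ((σ x i j : ℝ):ℂ) * pdC j u x * pdC i (fun z => φ (F z)) x := by
          apply Finset.sum_congr rfl; intro i _
          apply Finset.sum_congr rfl; intro j _
          rw [hpu j, hpφ i]
  · -- mass part
    have : ((ω ^ 2 * (η x / J) : ℝ) : ℂ) = (J:ℂ)⁻¹ * ((ω ^ 2 * η x : ℝ) : ℂ) := by
      push_cast; field_simp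
    rw [this]
    field_simp
end

section
/- Let 0 < ρ < r₁ < r₂ and set a = (r₁ − ρ)r₂/(r₂ − ρ), b = (r₂ − r₁)/(r₂ − ρ), and 𝓕(x) = (a + b‖x‖) x/‖x‖ for x ≠ 0. Then 𝓕 is bi-Lipschitz on the closed annulus A = {x ∈ ℝⁿ : ρ ≤ ‖x‖ ≤ r₂}: there exist constants 0 < c ≤ C < ∞ such that c‖x − y‖ ≤ ‖𝓕(x) − 𝓕(y)‖ ≤ C‖x − y‖ for all x, y ∈ A. -/
open RealInnerProductSpace

private lemma key_lower (κ b' s t p q ip : ℝ) (hs : 0 < s) (ht : 0 < t)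
    (h1 : ip ≤ s * t) (h2 : -(s * t) ≤ ip)
    (hκ : 0 ≤ κ) (hκb : κ ≤ b') (hpq : p - q = b' * (s - t))
    (hκpq : κ ^ 2 * (s * t) ≤ p * q) :
    κ ^ 2 * (s ^ 2 + t ^ 2 - 2 * ip) ≤ p ^ 2 + q ^ 2 - 2 * (p * q) * (ip / (s * t)) := by
  have hst : (0 : ℝ) < s * t := mul_pos hs ht
  have hle1 : ip / (s * t) ≤ 1 := (div_le_one hst).2 h1
  have hge : -1 ≤ ip / (s * t) := by rw [le_div_iff₀ hst]; linarith
  have hip : ip = (ip / (s * t)) * (s * t) := by field_simp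
  set c' := ip / (s * t) with hc'
  have hpq2 : (p - q) ^ 2 = (b' * (s - t)) ^ 2 := by rw [hpq]
  have hb2 : κ ^ 2 ≤ b' ^ 2 := by nlinarith
  nlinarith [mul_nonneg (sub_nonneg.2 hκpq) (sub_nonneg.2 hle1),
    mul_nonneg (sub_nonneg.2 hb2) (sq_nonneg (s - t))]

private lemma key_upper (K b' s t p q ip : ℝ) (hs : 0 < s) (ht : 0 < t)
    (h1 : ip ≤ s * t) (h2 : -(s * t) ≤ ip)
    (hb : 0 ≤ b') (hκb : b' ≤ K) (hpq : p - q = b' * (s - t))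
    (hκpq : p * q ≤ K ^ 2 * (s * t)) :
    p ^ 2 + q ^ 2 - 2 * (p * q) * (ip / (s * t)) ≤ K ^ 2 * (s ^ 2 + t ^ 2 - 2 * ip) := by
  have hst : (0 : ℝ) < s * t := mul_pos hs ht
  have hle1 : ip / (s * t) ≤ 1 := (div_le_one hst).2 h1
  have hge : -1 ≤ ip / (s * t) := by rw [le_div_iff₀ hst]; linarith
  have hip : ip = (ip / (s * t)) * (s * t) := by field_simp
  set c' := ip / (s * t) with hc'
  have hpq2 : (p - q) ^ 2 = (b' * (s - t)) ^ 2 := by rw [hpq]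
  have hb2 : b' ^ 2 ≤ K ^ 2 := by nlinarith
  nlinarith [mul_nonneg (sub_nonneg.2 hκpq) (sub_nonneg.2 hle1),
    mul_nonneg (sub_nonneg.2 hb2) (sq_nonneg (s - t))]

private lemma norm_formula {E : Type*} [NormedAddCommGroup E] [InnerProductSpace ℝ E]
    (x y : E) (p q : ℝ) (hx : x ≠ 0) (hy : y ≠ 0) :
    ‖(p / ‖x‖) • x - (q / ‖y‖) • y‖ ^ 2 =
      p ^ 2 + q ^ 2 - 2 * (p * q) * ((inner ℝ x y : ℝ) / (‖x‖ * ‖y‖)) := by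
  rw [@norm_sub_sq_real, norm_smul, norm_smul, real_inner_smul_left, real_inner_smul_right,
    Real.norm_eq_abs, Real.norm_eq_abs, mul_pow, mul_pow, sq_abs, sq_abs]
  have hs : ‖x‖ ≠ 0 := norm_ne_zero_iff.2 hx
  have ht : ‖y‖ ≠ 0 := norm_ne_zero_iff.2 hy
  field_simp
  ring

/-- The blow-up map `𝓕(x) = (a + b‖x‖) x/‖x‖` is bi-Lipschitz on the closed annulus
`A = {x : ρ ≤ ‖x‖ ≤ r₂}`: there exist `0 < c ≤ C` with
`c‖x − y‖ ≤ ‖𝓕(x) − 𝓕(y)‖ ≤ C‖x − y‖` for all `x, y ∈ A`. -/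
theorem blowup_map_biLipschitz {n : ℕ} (ρ r₁ r₂ : ℝ) (hρ : 0 < ρ) (h₁ : ρ < r₁)
    (h₂ : r₁ < r₂)
    (a b : ℝ) (ha : a = (r₁ - ρ) * r₂ / (r₂ - ρ)) (hb : b = (r₂ - r₁) / (r₂ - ρ))
    (F : EuclideanSpace ℝ (Fin n) → EuclideanSpace ℝ (Fin n))
    (hF : ∀ x, x ≠ 0 → F x = (a + b * ‖x‖) • (‖x‖⁻¹ • x)) :
    ∃ c C : ℝ, 0 < c ∧ c ≤ C ∧
      ∀ x ∈ {x : EuclideanSpace ℝ (Fin n) | ρ ≤ ‖x‖ ∧ ‖x‖ ≤ r₂},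
        ∀ y ∈ {x : EuclideanSpace ℝ (Fin n) | ρ ≤ ‖x‖ ∧ ‖x‖ ≤ r₂},
          c * ‖x - y‖ ≤ ‖F x - F y‖ ∧ ‖F x - F y‖ ≤ C * ‖x - y‖ := by
  have hr2ρ : (0:ℝ) < r₂ - ρ := by linarith
  have hb0 : 0 < b := by rw [hb]; exact div_pos (by linarith) hr2ρ
  have haρ : a + b * ρ = r₁ := by rw [ha, hb]; field_simp; ring
  have har₂ : a + b * r₂ = r₂ := by rw [ha, hb]; field_simp; ring
  set c := min b (r₁ / r₂) with hcdef
  set C := max b (r₂ / ρ) with hCdef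
  have hc0 : 0 < c := lt_min hb0 (div_pos (by linarith) (by linarith))
  have hcC : c ≤ C := le_trans (min_le_left _ _) (le_max_left _ _)
  refine ⟨c, C, hc0, hcC, ?_⟩
  rintro x ⟨hxρ, hxr⟩ y ⟨hyρ, hyr⟩
  set s := ‖x‖ with hsdef
  set t := ‖y‖ with htdef
  have hs : 0 < s := lt_of_lt_of_le hρ hxρ
  have ht : 0 < t := lt_of_lt_of_le hρ hyρ
  have hx0 : x ≠ 0 := by simpa [hsdef] using norm_pos_iff.mp hs
  have hy0 : y ≠ 0 := by simpa [htdef] using norm_pos_iff.mp ht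
  set p := a + b * s with hpdef
  set q := a + b * t with hqdef
  have hFx : F x = ((a + b * s) / s) • x := by
    rw [hF x hx0, smul_smul, div_eq_mul_inv]
  have hFy : F y = ((a + b * t) / t) • y := by
    rw [hF y hy0, smul_smul, div_eq_mul_inv]
  set ip := (inner ℝ x y : ℝ) with hipdef
  have hip1 : ip ≤ s * t := le_trans (le_abs_self _) (abs_real_inner_le_norm x y)
  have hip2 : -(s * t) ≤ ip := by
    have := abs_real_inner_le_norm x y
    rw [abs_le] at this
    exact this.1
  have hnx : ‖x - y‖ ^ 2 = s ^ 2 + t ^ 2 - 2 * ip := by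
    rw [@norm_sub_sq_real]; ring
  have hnF : ‖F x - F y‖ ^ 2 = p ^ 2 + q ^ 2 - 2 * (p * q) * (ip / (s * t)) := by
    rw [hFx, hFy]
    exact norm_formula x y (a + b * s) (a + b * t) hx0 hy0
  clear_value ip q p t s
  have hp1 : r₁ ≤ p := by
    rw [hpdef, ← haρ]
    have := mul_le_mul_of_nonneg_left hxρ hb0.le
    linarith
  have hp2 : p ≤ r₂ := by
    rw [hpdef, ← har₂]
    have := mul_le_mul_of_nonneg_left hxr hb0.le
    linarith
  have hq1 : r₁ ≤ q := by
    rw [hqdef, ← haρ]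
    have := mul_le_mul_of_nonneg_left hyρ hb0.le
    linarith
  have hq2 : q ≤ r₂ := by
    rw [hqdef, ← har₂]
    have := mul_le_mul_of_nonneg_left hyr hb0.le
    linarith
  have hpqdiff : p - q = b * (s - t) := by rw [hpdef, hqdef]; ring
  have hcb : c ≤ b := min_le_left _ _
  have hbC : b ≤ C := le_max_left _ _
  have hcr : c * r₂ ≤ r₁ := by
    have h := min_le_right b (r₁ / r₂)
    have h2 := mul_le_mul_of_nonneg_right h (by linarith : (0:ℝ) ≤ r₂)
    rwa [div_mul_cancel₀ r₁ (by linarith : r₂ ≠ 0), ← hcdef] at h2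
  have hCρ : r₂ ≤ C * ρ := by
    have h := le_max_right b (r₂ / ρ)
    have h2 := mul_le_mul_of_nonneg_right h hρ.le
    rwa [div_mul_cancel₀ r₂ (ne_of_gt hρ), ← hCdef] at h2
  clear_value c C
  have hC0 : 0 < C := lt_of_lt_of_le hc0 hcC
  have hcpq : c ^ 2 * (s * t) ≤ p * q := by
    have e1 : s * t ≤ r₂ * r₂ := mul_le_mul hxr hyr ht.le (by linarith)
    have e2 : c ^ 2 * (s * t) ≤ c ^ 2 * (r₂ * r₂) :=
      mul_le_mul_of_nonneg_left e1 (sq_nonneg c)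
    have e3 : (c * r₂) * (c * r₂) ≤ r₁ * r₁ :=
      mul_le_mul hcr hcr (mul_nonneg hc0.le (by linarith)) (by linarith)
    have e4 : r₁ * r₁ ≤ p * q := mul_le_mul hp1 hq1 (by linarith) (by linarith)
    have e5 : c ^ 2 * (r₂ * r₂) = (c * r₂) * (c * r₂) := by ring
    linarith [e2, e3, e4, e5]
  have hCpq : p * q ≤ C ^ 2 * (s * t) := by
    have e1 : p * q ≤ r₂ * r₂ := mul_le_mul hp2 hq2 (by linarith) (by linarith)
    have e2 : r₂ * r₂ ≤ (C * ρ) * (C * ρ) :=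
      mul_le_mul hCρ hCρ (by linarith) (mul_nonneg hC0.le hρ.le)
    have e3 : ρ * ρ ≤ s * t := mul_le_mul hxρ hyρ hρ.le hs.le
    have e4 : C ^ 2 * (ρ * ρ) ≤ C ^ 2 * (s * t) :=
      mul_le_mul_of_nonneg_left e3 (sq_nonneg C)
    have e5 : (C * ρ) * (C * ρ) = C ^ 2 * (ρ * ρ) := by ring
    linarith [e1, e2, e4, e5]
  have hlow2 : c ^ 2 * (s ^ 2 + t ^ 2 - 2 * ip) ≤ p ^ 2 + q ^ 2 - 2 * (p * q) * (ip / (s * t)) :=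
    key_lower c b s t p q ip hs ht hip1 hip2 hc0.le hcb hpqdiff hcpq
  have hup2 : p ^ 2 + q ^ 2 - 2 * (p * q) * (ip / (s * t)) ≤ C ^ 2 * (s ^ 2 + t ^ 2 - 2 * ip) :=
    key_upper C b s t p q ip hs ht hip1 hip2 hb0.le hbC hpqdiff hCpq
  constructor
  · have h1 : (c * ‖x - y‖) ^ 2 ≤ ‖F x - F y‖ ^ 2 := by
      rw [mul_pow, hnx, hnF]; exact hlow2
    have h2 := Real.sqrt_le_sqrt h1
    rwa [Real.sqrt_sq (by positivity), Real.sqrt_sq (norm_nonneg _)] at h2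
  · have h1 : ‖F x - F y‖ ^ 2 ≤ (C * ‖x - y‖) ^ 2 := by
      rw [mul_pow, hnx, hnF]; exact hup2
    have h2 := Real.sqrt_le_sqrt h1
    rwa [Real.sqrt_sq (norm_nonneg _), Real.sqrt_sq (by positivity)] at h2
end

section
/- Let ω > 0 and ρ > 0. For all x, y ∈ ℝ³ with y ≠ x and every ν ∈ ℝ³ with ‖ν‖ ≤ 1, the directional derivative in y of the rescaled Helmholtz kernel differs from that of the Laplace kernel by at most ω²ρ²/(8π): | D_y( y ↦ e^{iωρ‖x−y‖}/(4π‖x−y‖) )[ν] − D_y( y ↦ 1/(4π‖x−y‖) )[ν] | ≤ ω²ρ²/(8π), where D_y(·)[ν] denotes the Fréchet derivative at y applied to the direction ν. -/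
open Complex

lemma aux_exp_bound (s : ℝ) (hs : 0 ≤ s) :
    ‖Complex.I * (s:ℂ) * Complex.exp (Complex.I * (s:ℂ)) - Complex.exp (Complex.I * (s:ℂ)) + 1‖
      ≤ s ^ 2 / 2 := by
  have hder : ∀ u : ℝ, HasDerivAt
      (fun v : ℝ => Complex.I * (v:ℂ) * Complex.exp (Complex.I * (v:ℂ))
        - Complex.exp (Complex.I * (v:ℂ)) + 1)
      (-(u:ℂ) * Complex.exp (Complex.I * (u:ℂ))) u := by
    intro u
    have h1 : HasDerivAt (fun v : ℝ => Complex.I * (v:ℂ)) Complex.I u := by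
      simpa using (HasDerivAt.ofReal_comp (hasDerivAt_id u)).const_mul Complex.I
    have h2 := h1.cexp
    have h4 : HasDerivAt (fun v : ℝ => Complex.I * (v:ℂ) * Complex.exp (Complex.I * (v:ℂ))
        - Complex.exp (Complex.I * (v:ℂ)) + 1) _ u := ((h1.mul h2).sub h2).add_const 1
    convert h4 using 1
    have hI := Complex.I_sq
    linear_combination (-(u:ℂ) * Complex.exp (Complex.I * (u:ℂ))) * hI
  have hcont : Continuous fun u : ℝ => -(u:ℂ) * Complex.exp (Complex.I * (u:ℂ)) := by
    fun_prop
  have hint := intervalIntegral.integral_eq_sub_of_hasDerivAt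
      (f := fun v : ℝ => Complex.I * (v:ℂ) * Complex.exp (Complex.I * (v:ℂ))
        - Complex.exp (Complex.I * (v:ℂ)) + 1)
      (fun u _ => hder u) (hcont.intervalIntegrable 0 s)
  have h5 : Complex.I * (s:ℂ) * Complex.exp (Complex.I * (s:ℂ))
      - Complex.exp (Complex.I * (s:ℂ)) + 1
      = ∫ u in (0:ℝ)..s, -(u:ℂ) * Complex.exp (Complex.I * (u:ℂ)) := by
    rw [hint]; simp
  rw [h5]
  have hb : ∀ᵐ (u : ℝ) ∂((MeasureTheory.volume : MeasureTheory.Measure ℝ).restrict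
      (Set.uIoc (0:ℝ) s)), ‖-(u:ℂ) * Complex.exp (Complex.I * (u:ℂ))‖ ≤ u := by
    rw [Set.uIoc_of_le hs]
    filter_upwards [MeasureTheory.ae_restrict_mem measurableSet_Ioc] with u hu
    have h6 : ‖-(u:ℂ) * Complex.exp (Complex.I * (u:ℂ))‖ = |u| := by
      simp [Complex.norm_exp]
    rw [h6, abs_of_pos hu.1]
  have h7 := intervalIntegral.norm_integral_le_of_norm_le hs (by rw [← Set.uIoc_of_le hs]; exact (MeasureTheory.ae_restrict_iff' measurableSet_uIoc).mp hb)
      (continuous_id.intervalIntegrable 0 s)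
  calc ‖∫ u in (0:ℝ)..s, -(u:ℂ) * Complex.exp (Complex.I * (u:ℂ))‖
      ≤ |∫ u in (0:ℝ)..s, u| := h7.trans (le_abs_self _)
    _ = s ^ 2 / 2 := by
        rw [integral_id, show (s ^ 2 - 0 ^ 2) / 2 = s ^ 2 / 2 by ring]
        exact _root_.abs_of_nonneg (by positivity)

/-- Uniform `O(ρ²)` comparison of the gradient of the rescaled Helmholtz kernel with
that of the Laplace kernel: for `y ≠ x` and any direction `ν` with `‖ν‖ ≤ 1`,
`|D_y(e^{iωρ‖x−y‖}/(4π‖x−y‖))[ν] − D_y(1/(4π‖x−y‖))[ν]| ≤ ω²ρ²/(8π)`. -/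
theorem kernel_gradient_comparison (ω ρ : ℝ) (hω : 0 < ω) (hρ : 0 < ρ)
    (x y : EuclideanSpace ℝ (Fin 3)) (hxy : y ≠ x)
    (ν : EuclideanSpace ℝ (Fin 3)) (hν : ‖ν‖ ≤ 1) :
    ‖fderiv ℝ (fun z : EuclideanSpace ℝ (Fin 3) =>
          Complex.exp (Complex.I * ((ω * ρ * ‖x - z‖ : ℝ) : ℂ)) /
            ((4 * Real.pi * ‖x - z‖ : ℝ) : ℂ)) y ν
      - fderiv ℝ (fun z : EuclideanSpace ℝ (Fin 3) =>
          (((4 * Real.pi * ‖x - z‖ : ℝ) : ℂ))⁻¹) y ν‖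
      ≤ ω ^ 2 * ρ ^ 2 / (8 * Real.pi) := by
  have hpi := Real.pi_pos
  have hxy' : x - y ≠ 0 := sub_ne_zero.mpr (Ne.symm hxy)
  have ht0 : (0:ℝ) < ‖x - y‖ := norm_pos_iff.mpr hxy'
  -- differentiability of the radial function
  have hrdiff : DifferentiableAt ℝ (fun z : EuclideanSpace ℝ (Fin 3) => ‖x - z‖) y :=
    DifferentiableAt.norm ℝ ((differentiableAt_const x).sub differentiableAt_id) hxy'
  set R := fderiv ℝ (fun z : EuclideanSpace ℝ (Fin 3) => ‖x - z‖) y with hRdef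
  have hRd : HasFDerivAt (fun z : EuclideanSpace ℝ (Fin 3) => ‖x - z‖) R y :=
    hrdiff.hasFDerivAt
  have hlip : LipschitzWith 1 (fun z : EuclideanSpace ℝ (Fin 3) => ‖x - z‖) := by
    apply LipschitzWith.of_dist_le_mul
    intro a b
    rw [NNReal.coe_one, one_mul, Real.dist_eq, dist_eq_norm]
    calc |‖x - a‖ - ‖x - b‖| ≤ ‖(x - a) - (x - b)‖ := abs_norm_sub_norm_le _ _
      _ = ‖a - b‖ := by rw [sub_sub_sub_cancel_left, norm_sub_rev]
  have hRn : ‖R‖ ≤ 1 := by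
    simpa using hRd.le_of_lipschitz hlip
  -- scalar derivatives
  have hden : HasDerivAt (fun u : ℝ => ((4 * Real.pi * u : ℝ) : ℂ))
      ((4 * Real.pi : ℝ) : ℂ) ‖x - y‖ :=
    HasDerivAt.ofReal_comp (by simpa using (hasDerivAt_id ‖x - y‖).const_mul (4 * Real.pi))
  have hden0 : ((4 * Real.pi * ‖x - y‖ : ℝ) : ℂ) ≠ 0 := by
    exact_mod_cast (ne_of_gt (by positivity : (0:ℝ) < 4 * Real.pi * ‖x - y‖))
  have hnum : HasDerivAt (fun u : ℝ => Complex.exp (Complex.I * ((ω * ρ * u : ℝ) : ℂ)))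
      (Complex.exp (Complex.I * ((ω * ρ * ‖x - y‖ : ℝ) : ℂ)) * (Complex.I * ((ω * ρ : ℝ) : ℂ)))
      ‖x - y‖ := by
    have h1 : HasDerivAt (fun u : ℝ => ((ω * ρ * u : ℝ) : ℂ)) ((ω * ρ : ℝ) : ℂ) ‖x - y‖ :=
      HasDerivAt.ofReal_comp (by simpa using (hasDerivAt_id ‖x - y‖).const_mul (ω * ρ))
    exact (h1.const_mul Complex.I).cexp
  have hφ := hnum.fun_div hden hden0
  have hψ : HasDerivAt (fun u : ℝ => (((4 * Real.pi * u : ℝ) : ℂ))⁻¹)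
      (-((4 * Real.pi : ℝ) : ℂ) / ((4 * Real.pi * ‖x - y‖ : ℝ) : ℂ) ^ 2) ‖x - y‖ := by
    have h := (hasDerivAt_const ‖x - y‖ (1:ℂ)).fun_div hden hden0
    simp only [one_div] at h
    refine h.congr_deriv ?_
    ring
  -- compose with the radial function
  have hF1 : HasFDerivAt (fun z : EuclideanSpace ℝ (Fin 3) =>
        Complex.exp (Complex.I * ((ω * ρ * ‖x - z‖ : ℝ) : ℂ)) /
          ((4 * Real.pi * ‖x - z‖ : ℝ) : ℂ))
      (((1 : ℝ →L[ℝ] ℝ).smulRight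
        ((Complex.exp (Complex.I * ((ω * ρ * ‖x - y‖ : ℝ) : ℂ)) * (Complex.I * ((ω * ρ : ℝ) : ℂ))
            * ((4 * Real.pi * ‖x - y‖ : ℝ) : ℂ)
          - Complex.exp (Complex.I * ((ω * ρ * ‖x - y‖ : ℝ) : ℂ)) * ((4 * Real.pi : ℝ) : ℂ)) /
            ((4 * Real.pi * ‖x - y‖ : ℝ) : ℂ) ^ 2)).comp R) y :=
    (hφ.hasFDerivAt.comp y hRd :)
  have hF2 : HasFDerivAt (fun z : EuclideanSpace ℝ (Fin 3) =>
        (((4 * Real.pi * ‖x - z‖ : ℝ) : ℂ))⁻¹)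
      (((1 : ℝ →L[ℝ] ℝ).smulRight
        (-((4 * Real.pi : ℝ) : ℂ) / ((4 * Real.pi * ‖x - y‖ : ℝ) : ℂ) ^ 2)).comp R) y :=
    (hψ.hasFDerivAt.comp y hRd :)
  rw [hF1.fderiv, hF2.fderiv]
  simp only [ContinuousLinearMap.coe_comp', Function.comp_apply,
    ContinuousLinearMap.smulRight_apply, ContinuousLinearMap.one_apply]
  rw [← smul_sub, norm_smul]
  have hRν : ‖R ν‖ ≤ 1 := by
    calc ‖R ν‖ ≤ ‖R‖ * ‖ν‖ := R.le_opNorm ν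
      _ ≤ 1 * 1 := mul_le_mul hRn hν (norm_nonneg _) zero_le_one
      _ = 1 := one_mul 1
  have hdiff : ‖(Complex.exp (Complex.I * ((ω * ρ * ‖x - y‖ : ℝ) : ℂ)) * (Complex.I * ((ω * ρ : ℝ) : ℂ))
            * ((4 * Real.pi * ‖x - y‖ : ℝ) : ℂ)
          - Complex.exp (Complex.I * ((ω * ρ * ‖x - y‖ : ℝ) : ℂ)) * ((4 * Real.pi : ℝ) : ℂ)) /
            ((4 * Real.pi * ‖x - y‖ : ℝ) : ℂ) ^ 2
        - -((4 * Real.pi : ℝ) : ℂ) / ((4 * Real.pi * ‖x - y‖ : ℝ) : ℂ) ^ 2‖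
      ≤ ω ^ 2 * ρ ^ 2 / (8 * Real.pi) := by
    set s : ℝ := ω * ρ * ‖x - y‖ with hsdef
    have hs0 : 0 < s := by positivity
    have heq : (Complex.exp (Complex.I * (s : ℂ)) * (Complex.I * ((ω * ρ : ℝ) : ℂ))
            * ((4 * Real.pi * ‖x - y‖ : ℝ) : ℂ)
          - Complex.exp (Complex.I * (s : ℂ)) * ((4 * Real.pi : ℝ) : ℂ)) /
            ((4 * Real.pi * ‖x - y‖ : ℝ) : ℂ) ^ 2
        - -((4 * Real.pi : ℝ) : ℂ) / ((4 * Real.pi * ‖x - y‖ : ℝ) : ℂ) ^ 2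
      = ((4 * Real.pi : ℝ) : ℂ) *
          (Complex.I * (s:ℂ) * Complex.exp (Complex.I * (s:ℂ))
            - Complex.exp (Complex.I * (s:ℂ)) + 1) /
          ((4 * Real.pi * ‖x - y‖ : ℝ) : ℂ) ^ 2 := by
      rw [div_sub_div_same]
      congr 1
      push_cast [hsdef]
      ring
    rw [heq, norm_div, norm_mul]
    have h1 : ‖((4 * Real.pi : ℝ) : ℂ)‖ = 4 * Real.pi := by
      rw [Complex.norm_real, Real.norm_eq_abs, abs_of_pos (by positivity)]
    have h2 : ‖((4 * Real.pi * ‖x - y‖ : ℝ) : ℂ) ^ 2‖ = (4 * Real.pi * ‖x - y‖) ^ 2 := by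
      rw [norm_pow, Complex.norm_real, Real.norm_eq_abs, abs_of_pos (by positivity)]
    rw [h1, h2]
    have h3 := aux_exp_bound s hs0.le
    rw [div_le_iff₀ (by positivity)]
    calc 4 * Real.pi * ‖Complex.I * (s:ℂ) * Complex.exp (Complex.I * (s:ℂ))
            - Complex.exp (Complex.I * (s:ℂ)) + 1‖
        ≤ 4 * Real.pi * (s ^ 2 / 2) := by
          exact mul_le_mul_of_nonneg_left h3 (by positivity)
      _ = ω ^ 2 * ρ ^ 2 / (8 * Real.pi) * (4 * Real.pi * ‖x - y‖) ^ 2 := by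
          rw [hsdef]
          field_simp
          ring
  calc ‖R ν‖ * ‖_ - _‖ ≤ 1 * (ω ^ 2 * ρ ^ 2 / (8 * Real.pi)) := by
        exact mul_le_mul hRν hdiff (norm_nonneg _) zero_le_one
    _ = ω ^ 2 * ρ ^ 2 / (8 * Real.pi) := one_mul _
end

section
/- Let ω > 0, M > 0, let μ be a finite Borel measure on ℝ³ whose support is contained in the closed ball of radius M centered at the origin, and let ψ : ℝ³ → ℂ be bounded and measurable. Define w(x) = ∫ e^{iω‖x−y‖}/(4π‖x−y‖) · ψ(y) dμ(y) for ‖x‖ > M, and define the far-field pattern A : S² → ℂ by A(θ) = (1/(4π)) ∫ e^{−iω⟨θ, y⟩} ψ(y) dμ(y). Then there exists a constant C > 0 such that for all x with ‖x‖ ≥ 4M, | w(x) − e^{iω‖x‖} A(x/‖x‖) / ‖x‖ | ≤ C / ‖x‖². -/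
open MeasureTheory
open scoped RealInnerProductSpace

lemma norm_exp_I_mul (t : ℝ) : ‖Complex.exp (Complex.I * t)‖ = 1 := by
  rw [Complex.norm_exp]; simp

lemma norm_exp_neg_I_mul (t : ℝ) : ‖Complex.exp (-(Complex.I * t))‖ = 1 := by
  rw [Complex.norm_exp]; simp

lemma exp_I_dist (a b : ℝ) :
    ‖Complex.exp (Complex.I * a) - Complex.exp (Complex.I * b)‖ ≤ 2 * |a - b| := by
  have key : ∀ θ : ℝ, ‖Complex.exp (Complex.I * θ) - 1‖ ≤ 2 * |θ| := by
    intro θ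
    have habs : ‖Complex.I * θ‖ = |θ| := by
      rw [norm_mul, Complex.norm_I, one_mul, Complex.norm_real, Real.norm_eq_abs]
    by_cases h : |θ| ≤ 1
    · have := Complex.norm_exp_sub_one_le (x := Complex.I * θ) (by rw [habs]; exact h)
      simpa [habs] using this
    · push_neg at h
      calc ‖Complex.exp (Complex.I * θ) - 1‖
          ≤ ‖Complex.exp (Complex.I * θ)‖ + ‖(1:ℂ)‖ := norm_sub_le _ _
        _ = 2 := by rw [norm_exp_I_mul]; norm_num
        _ ≤ 2 * |θ| := by nlinarith
  have h1 : Complex.exp (Complex.I * a) - Complex.exp (Complex.I * b)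
      = Complex.exp (Complex.I * (b:ℂ)) * (Complex.exp (Complex.I * ((a - b : ℝ) : ℂ)) - 1) := by
    rw [mul_sub, mul_one, ← Complex.exp_add]
    congr 2
    push_cast
    ring
  rw [h1, norm_mul, norm_exp_I_mul, one_mul]
  exact key (a - b)

lemma pointwise_est (ω M R r s p ny : ℝ) (hω : 0 < ω) (hM : 0 < M) (hR0 : 0 < R)
    (hM4 : M ≤ R / 4) (hp : |p| ≤ M) (hny0 : 0 ≤ ny) (hny : ny ≤ M)
    (hr_lb : 3 / 4 * R ≤ r) (hRr : |R - r| ≤ M)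
    (h3 : r ^ 2 = R ^ 2 - 2 * (R * p) + ny ^ 2) (hsdef : s = R - p) :
    ‖Complex.exp (Complex.I * ((ω * r : ℝ) : ℂ)) / ((4 * Real.pi * r : ℝ) : ℂ)
      - Complex.exp (Complex.I * ((ω * s : ℝ) : ℂ)) / ((4 * Real.pi * R : ℝ) : ℂ)‖
      ≤ M / (3 * Real.pi * R ^ 2) + 2 * (ω * (2 * M ^ 2 / (3 * R))) * (1 / (4 * Real.pi * R)) := by
  have hπ : 0 < Real.pi := Real.pi_pos
  have hpM := abs_le.mp hp
  have hr0 : 0 < r := by linarith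
  have hs_lb : 3 / 4 * R ≤ s := by rw [hsdef]; linarith
  have hs0 : 0 < s := by linarith
  have hrs : |r - s| ≤ 2 * M ^ 2 / (3 * R) := by
    have hsq : r ^ 2 - s ^ 2 = ny ^ 2 - p ^ 2 := by rw [hsdef]; linear_combination h3
    have habs2 : |r - s| * (r + s) = |r ^ 2 - s ^ 2| := by
      rw [← abs_of_pos (show (0:ℝ) < r + s by linarith), ← abs_mul]
      congr 1; ring
    have hp2 : p ^ 2 ≤ M ^ 2 := sq_le_sq' hpM.1 hpM.2
    have hny2 : ny ^ 2 ≤ M ^ 2 := pow_le_pow_left₀ hny0 hny 2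
    have hub : |r ^ 2 - s ^ 2| ≤ M ^ 2 := by
      rw [hsq, abs_le]
      constructor
      · linarith [sq_nonneg ny]
      · linarith [sq_nonneg p]
    rw [le_div_iff₀ (by positivity : (0:ℝ) < 3 * R)]
    linarith [mul_le_mul_of_nonneg_left (show 3 * R ≤ 2 * (r + s) by linarith)
      (abs_nonneg (r - s)), habs2, hub]
  set a : ℝ := 4 * Real.pi * r with hadef
  set b : ℝ := 4 * Real.pi * R with hbdef
  have ha0 : 0 < a := by positivity
  have hb0 : 0 < b := by positivity
  have haC : (a : ℂ) ≠ 0 := Complex.ofReal_ne_zero.mpr (ne_of_gt ha0)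
  have hbC : (b : ℂ) ≠ 0 := Complex.ofReal_ne_zero.mpr (ne_of_gt hb0)
  have hdecomp : Complex.exp (Complex.I * ((ω * r : ℝ) : ℂ)) / (a : ℂ) -
      Complex.exp (Complex.I * ((ω * s : ℝ) : ℂ)) / (b : ℂ)
      = Complex.exp (Complex.I * ((ω * r : ℝ) : ℂ)) * ((1 / a - 1 / b : ℝ) : ℂ)
        + (Complex.exp (Complex.I * ((ω * r : ℝ) : ℂ))
            - Complex.exp (Complex.I * ((ω * s : ℝ) : ℂ))) * ((1 / b : ℝ) : ℂ) := by
    push_cast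
    field_simp
    ring
  have h1b : |1 / a - 1 / b| ≤ M / (3 * Real.pi * R ^ 2) := by
    have hab : 1 / a - 1 / b = (b - a) / (a * b) := by field_simp
    rw [hab, abs_div, abs_of_pos (mul_pos ha0 hb0),
      div_le_div_iff₀ (mul_pos ha0 hb0) (by positivity)]
    have h4 : |b - a| ≤ 4 * Real.pi * M := by
      have h5 : b - a = 4 * Real.pi * (R - r) := by rw [hadef, hbdef]; ring
      rw [h5, abs_mul, abs_of_pos (by positivity : (0:ℝ) < 4 * Real.pi)]
      exact mul_le_mul_of_nonneg_left hRr (by positivity)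
    have ha' : 3 * Real.pi * R ≤ a := by
      rw [hadef]
      linarith [mul_le_mul_of_nonneg_left (show 3 * R ≤ 4 * r by linarith) (le_of_lt hπ)]
    have hab2 : 12 * Real.pi ^ 2 * R ^ 2 ≤ a * b := by
      calc 12 * Real.pi ^ 2 * R ^ 2 = 3 * Real.pi * R * (4 * Real.pi * R) := by ring
        _ ≤ a * (4 * Real.pi * R) :=
            mul_le_mul_of_nonneg_right ha' (by positivity)
        _ = a * b := by rw [hbdef]
    have h5 : M * (12 * Real.pi ^ 2 * R ^ 2) ≤ M * (a * b) :=
      mul_le_mul_of_nonneg_left hab2 (le_of_lt hM)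
    linarith [mul_le_mul_of_nonneg_right h4
      (le_of_lt (show (0:ℝ) < 3 * Real.pi * R ^ 2 by positivity)), h5]
  have hE : ‖Complex.exp (Complex.I * ((ω * r : ℝ) : ℂ))
      - Complex.exp (Complex.I * ((ω * s : ℝ) : ℂ))‖ ≤ 2 * (ω * (2 * M ^ 2 / (3 * R))) := by
    refine le_trans (exp_I_dist (ω * r) (ω * s)) ?_
    have h4 : |ω * r - ω * s| = ω * |r - s| := by
      rw [show ω * r - ω * s = ω * (r - s) by ring, abs_mul, abs_of_pos hω]
    rw [h4]
    have := mul_le_mul_of_nonneg_left hrs (le_of_lt hω)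
    linarith
  rw [hdecomp]
  refine le_trans (norm_add_le _ _) ?_
  rw [norm_mul, norm_mul, norm_exp_I_mul, one_mul, Complex.norm_real,
    Complex.norm_real, Real.norm_eq_abs, Real.norm_eq_abs,
    abs_of_pos (show (0:ℝ) < 1 / b by positivity)]
  exact add_le_add h1b (mul_le_mul_of_nonneg_right hE (by positivity))


/-- Far-field asymptotics of an acoustic potential: if
`w(x) = ∫ e^{iω‖x−y‖}/(4π‖x−y‖) ψ(y) dμ(y)` with `μ` a finite measure supported in
the ball of radius `M` and `ψ` bounded measurable, and
`A(θ) = (1/(4π)) ∫ e^{−iω⟨θ,y⟩} ψ(y) dμ(y)` is the far-field pattern, then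
`|w(x) − e^{iω‖x‖} A(x/‖x‖)/‖x‖| ≤ C/‖x‖²` for `‖x‖ ≥ 4M`. -/
theorem potential_farfield_asymptotics (ω M : ℝ) (hω : 0 < ω) (hM : 0 < M)
    (μ : Measure (EuclideanSpace ℝ (Fin 3))) [IsFiniteMeasure μ]
    (hμsupp : μ (Metric.closedBall (0 : EuclideanSpace ℝ (Fin 3)) M)ᶜ = 0)
    (ψ : EuclideanSpace ℝ (Fin 3) → ℂ) (hψm : Measurable ψ)
    (hψb : Bornology.IsBounded (Set.range ψ))
    (w A : EuclideanSpace ℝ (Fin 3) → ℂ)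
    (hw : ∀ x : EuclideanSpace ℝ (Fin 3), M < ‖x‖ →
      w x = ∫ y, (Complex.exp (Complex.I * ((ω * ‖x - y‖ : ℝ) : ℂ)) /
        ((4 * Real.pi * ‖x - y‖ : ℝ) : ℂ)) * ψ y ∂μ)
    (hA : ∀ θ : EuclideanSpace ℝ (Fin 3),
      A θ = (((4 * Real.pi : ℝ) : ℂ))⁻¹ *
        ∫ y, Complex.exp (-(Complex.I * ((ω * ⟪θ, y⟫ : ℝ) : ℂ))) * ψ y ∂μ) :
    ∃ C : ℝ, 0 < C ∧
      ∀ x : EuclideanSpace ℝ (Fin 3), 4 * M ≤ ‖x‖ →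
        ‖w x - Complex.exp (Complex.I * ((ω * ‖x‖ : ℝ) : ℂ)) * A (‖x‖⁻¹ • x)
            / ((‖x‖ : ℝ) : ℂ)‖
          ≤ C / ‖x‖ ^ 2 := by
  have hπ : 0 < Real.pi := Real.pi_pos
  obtain ⟨B, hB⟩ := isBounded_iff_forall_norm_le.mp hψb
  have hBψ : ∀ y, ‖ψ y‖ ≤ B := fun y => hB _ (Set.mem_range_self y)
  have hB0 : 0 ≤ B := le_trans (norm_nonneg _) (hBψ 0)
  set T : ℝ := (μ Set.univ).toReal with hT
  have hT0 : 0 ≤ T := ENNReal.toReal_nonneg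
  set D : ℝ := B / (4 * Real.pi) * (4 * M / 3 + 4 * ω * M ^ 2 / 3) with hD
  clear_value T
  have hD0 : 0 ≤ D := by
    apply mul_nonneg (div_nonneg hB0 (by positivity))
    nlinarith [sq_nonneg M]
  clear_value D
  refine ⟨D * T + 1, by linarith [mul_nonneg hD0 hT0], ?_⟩
  intro x hx
  set R : ℝ := ‖x‖ with hRdef
  have hR0 : 0 < R := by simp only [hRdef]; linarith
  have hMR : M < R := by linarith
  have hM4 : M ≤ R / 4 := by linarith
  clear_value R
  -- a.e. support
  have hae : ∀ᵐ y ∂μ, ‖y‖ ≤ M := by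
    rw [ae_iff]
    convert hμsupp using 2
    ext y
    simp [Metric.mem_closedBall, dist_zero_right, not_le]
  -- the two integrands
  set f : EuclideanSpace ℝ (Fin 3) → ℂ := fun y =>
    Complex.exp (Complex.I * ((ω * ‖x - y‖ : ℝ) : ℂ)) / ((4 * Real.pi * ‖x - y‖ : ℝ) : ℂ) * ψ y
    with hf
  set c : ℂ := Complex.exp (Complex.I * ((ω * R : ℝ) : ℂ)) * (((4 * Real.pi : ℝ) : ℂ))⁻¹ / (R : ℂ)
    with hc
  set g : EuclideanSpace ℝ (Fin 3) → ℂ := fun y =>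
    c * (Complex.exp (-(Complex.I * ((ω * ⟪(R⁻¹ • x : EuclideanSpace ℝ (Fin 3)), y⟫ : ℝ) : ℂ))) * ψ y)
    with hg
  have hnormc : ‖c‖ = (4 * Real.pi)⁻¹ / R := by
    rw [hc, norm_div, norm_mul, norm_exp_I_mul, one_mul, norm_inv]
    rw [Complex.norm_real, Complex.norm_real, Real.norm_eq_abs, Real.norm_eq_abs,
      abs_of_pos (by positivity), abs_of_pos hR0]
  -- measurability
  have hmes : Measurable fun y : EuclideanSpace ℝ (Fin 3) => ‖x - y‖ :=
    (continuous_const.sub continuous_id).norm.measurable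
  have hmf : Measurable f := by
    rw [hf]
    apply Measurable.mul _ hψm
    apply Measurable.div
    · exact Complex.measurable_exp.comp
        ((Complex.measurable_ofReal.comp (hmes.const_mul ω)).const_mul Complex.I)
    · exact Complex.measurable_ofReal.comp (hmes.const_mul (4 * Real.pi))
  have hmg : Measurable g := by
    rw [hg]
    apply Measurable.const_mul
    apply Measurable.mul _ hψm
    apply Complex.measurable_exp.comp
    apply Measurable.neg
    apply Measurable.const_mul
    apply Complex.measurable_ofReal.comp
    apply Measurable.const_mul
    exact (measurable_const.inner measurable_id)
  -- lower bound on ‖x - y‖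
  have hlb : ∀ y : EuclideanSpace ℝ (Fin 3), ‖y‖ ≤ M → 3 / 4 * R ≤ ‖x - y‖ := by
    intro y hy
    have h1 : ‖x‖ - ‖x - y‖ ≤ ‖x - (x - y)‖ := norm_sub_norm_le x (x - y)
    rw [sub_sub_cancel] at h1
    have h2 : R = ‖x‖ := hRdef
    linarith
  -- integrability
  have hfint : Integrable f μ := by
    refine ⟨hmf.aestronglyMeasurable, HasFiniteIntegral.of_bounded
      (C := B / (3 * Real.pi * R)) ?_⟩
    filter_upwards [hae] with y hy
    have hr_lb : 3 / 4 * R ≤ ‖x - y‖ := hlb y hy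
    have hr0 : 0 < ‖x - y‖ := by linarith
    have hnf : ‖f y‖ = 1 / (4 * Real.pi * ‖x - y‖) * ‖ψ y‖ := by
      simp only [hf]
      rw [norm_mul, norm_div, norm_exp_I_mul, Complex.norm_real, Real.norm_eq_abs,
        abs_of_pos (by positivity), one_div]
    rw [hnf, div_mul_eq_mul_div, one_mul]
    have h36 : 3 * Real.pi * R ≤ 4 * Real.pi * ‖x - y‖ := by
      linarith [mul_le_mul_of_nonneg_left (show 3 * R ≤ 4 * ‖x - y‖ by linarith) (le_of_lt hπ)]
    exact div_le_div₀ hB0 (hBψ y) (by positivity) h36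
  have hgint : Integrable g μ := by
    refine ⟨hmg.aestronglyMeasurable, HasFiniteIntegral.of_bounded
      (C := (4 * Real.pi)⁻¹ / R * B) (ae_of_all _ fun y => ?_)⟩
    simp only [hg]
    rw [norm_mul, norm_mul, hnormc, norm_exp_neg_I_mul, one_mul]
    exact mul_le_mul_of_nonneg_left (hBψ y) (by positivity)
  clear_value c f g
  -- rewrite as a single integral
  have h1 : w x = ∫ y, f y ∂μ := by rw [hw x (hRdef ▸ hMR), hf]
  have h2 : Complex.exp (Complex.I * ((ω * R : ℝ) : ℂ)) * A (R⁻¹ • x) / ((R : ℝ) : ℂ)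
      = ∫ y, g y ∂μ := by
    rw [hA (R⁻¹ • x)]
    simp only [hg]
    rw [integral_const_mul, hc]
    ring
  rw [h1, h2, ← integral_sub hfint hgint]
  -- the pointwise bound
  have key : ∀ᵐ y ∂μ, ‖f y - g y‖ ≤ D / R ^ 2 := by
    filter_upwards [hae] with y hy
    simp only [hf, hg]
    set p : ℝ := ⟪(R⁻¹ • x : EuclideanSpace ℝ (Fin 3)), y⟫ with hpdef
    set r : ℝ := ‖x - y‖ with hrdef2
    have hr_lb : 3 / 4 * R ≤ r := hlb y hy
    have hr0 : 0 < r := by linarith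
    have hxu : ‖(R⁻¹ • x : EuclideanSpace ℝ (Fin 3))‖ = 1 := by
      rw [norm_smul, Real.norm_eq_abs, abs_of_pos (inv_pos.mpr hR0), ← hRdef,
        inv_mul_cancel₀ (ne_of_gt hR0)]
    have hp : |p| ≤ M := by
      have h3 := abs_real_inner_le_norm ((R : ℝ)⁻¹ • x) y
      rw [hxu, one_mul] at h3
      linarith
    have hpM := abs_le.mp hp
    have hip : ⟪x, y⟫ = R * p := by
      rw [hpdef, real_inner_smul_left]
      field_simp
    set s : ℝ := R - p with hsdef
    have hs_lb : 3 / 4 * R ≤ s := by rw [hsdef]; linarith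
    have hs0 : 0 < s := by linarith
    have hRr : |R - r| ≤ M := by
      have h3 : ‖x‖ - ‖x - y‖ ≤ ‖x - (x - y)‖ := norm_sub_norm_le x (x - y)
      rw [sub_sub_cancel] at h3
      have h4 : ‖x - y‖ - ‖x‖ ≤ ‖x - y - x‖ := norm_sub_norm_le (x - y) x
      have h5 : ‖x - y - x‖ = ‖y‖ := by rw [show x - y - x = -y by abel, norm_neg]
      rw [h5] at h4
      have h6 : R = ‖x‖ := hRdef
      rw [abs_le]; constructor <;> [linarith; linarith]
    have h3 : r ^ 2 = R ^ 2 - 2 * (R * p) + ‖y‖ ^ 2 := by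
      have h3 : r ^ 2 = ‖x‖ ^ 2 - 2 * ⟪x, y⟫ + ‖y‖ ^ 2 := norm_sub_sq_real x y
      rw [hip, ← hRdef] at h3
      exact h3
    clear_value p r s
    have hest := pointwise_est ω M R r s p ‖y‖ hω hM hR0 hM4 hp (norm_nonneg y) hy
      hr_lb hRr h3 hsdef
    have hπC : (Real.pi : ℂ) ≠ 0 := Complex.ofReal_ne_zero.mpr (ne_of_gt hπ)
    have hRC : (R : ℂ) ≠ 0 := Complex.ofReal_ne_zero.mpr (ne_of_gt hR0)
    have hprod : Complex.exp (Complex.I * ((ω * R : ℝ) : ℂ)) *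
        Complex.exp (-(Complex.I * ((ω * p : ℝ) : ℂ)))
        = Complex.exp (Complex.I * ((ω * s : ℝ) : ℂ)) := by
      rw [← Complex.exp_add]
      congr 1
      rw [hsdef]
      push_cast
      ring
    have hgy : c * (Complex.exp (-(Complex.I * ((ω * p : ℝ) : ℂ))) * ψ y)
        = Complex.exp (Complex.I * ((ω * s : ℝ) : ℂ)) / ((4 * Real.pi * R : ℝ) : ℂ) * ψ y := by
      rw [← hprod, hc]
      push_cast
      field_simp
    rw [hgy]
    calc ‖Complex.exp (Complex.I * ((ω * r : ℝ) : ℂ)) / ((4 * Real.pi * r : ℝ) : ℂ) * ψ y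
          - Complex.exp (Complex.I * ((ω * s : ℝ) : ℂ)) / ((4 * Real.pi * R : ℝ) : ℂ) * ψ y‖
        = ‖Complex.exp (Complex.I * ((ω * r : ℝ) : ℂ)) / ((4 * Real.pi * r : ℝ) : ℂ)
            - Complex.exp (Complex.I * ((ω * s : ℝ) : ℂ)) / ((4 * Real.pi * R : ℝ) : ℂ)‖
            * ‖ψ y‖ := by
          rw [← norm_mul]; congr 1; ring
      _ ≤ (M / (3 * Real.pi * R ^ 2)
            + 2 * (ω * (2 * M ^ 2 / (3 * R))) * (1 / (4 * Real.pi * R))) * B :=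
          mul_le_mul hest (hBψ y) (norm_nonneg _) (by positivity)
      _ = D / R ^ 2 := by
          rw [hD]
          field_simp
          ring
  refine le_trans (norm_integral_le_of_norm_le_const key) ?_
  rw [show μ.real Set.univ = T by rw [hT]; rfl, show D / R ^ 2 * T = D * T / R ^ 2 by ring]
  gcongr
  linarith
end

section
/- Let ω > 0, M > 0, let μ be a finite Borel measure on ℝ³ whose support is contained in the closed ball of radius M centered at the origin, and let ψ : ℝ³ → ℂ be bounded and measurable. Define w(x) = ∫ e^{iω‖x−y‖}/(4π‖x−y‖) · ψ(y) dμ(y) for ‖x‖ > M. Then w is differentiable on {x : ‖x‖ > M} and satisfies the Sommerfeld radiation condition: for every ε > 0 there exists R > 0 such that for all x with ‖x‖ ≥ R, ‖x‖ · | Dw(x)[x/‖x‖] − iω w(x) | < ε, where Dw(x)[x/‖x‖] denotes the (real) Fréchet derivative of w at x applied to the unit radial direction x/‖x‖. -/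
set_option maxHeartbeats 1000000
set_option synthInstance.maxHeartbeats 400000

open MeasureTheory Complex ContinuousLinearMap

noncomputable def hfun (ω r : ℝ) : ℂ :=
  Complex.exp (Complex.I * ω * r) * (((4 * Real.pi * r)⁻¹ : ℝ) : ℂ)

lemma hfun_eq (ω r : ℝ) :
    Complex.exp (Complex.I * ((ω * r : ℝ) : ℂ)) / ((4 * Real.pi * r : ℝ) : ℂ) = hfun ω r := by
  rw [hfun, div_eq_mul_inv, ← Complex.ofReal_inv]
  push_cast
  ring_nf

lemma norm_hfun (ω : ℝ) {r : ℝ} (hr : 0 < r) : ‖hfun ω r‖ = (4 * Real.pi * r)⁻¹ := by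
  rw [hfun, norm_mul, Complex.norm_exp]
  have h0 : (Complex.I * ω * r).re = 0 := by simp
  rw [h0, Real.exp_zero, one_mul, Complex.norm_real]
  exact Real.norm_of_nonneg (by positivity)

lemma hfun_hasDerivAt (ω : ℝ) {r : ℝ} (hr : 0 < r) :
    HasDerivAt (hfun ω) (hfun ω r * (Complex.I * ω - (r : ℂ)⁻¹)) r := by
  have hπ : (Real.pi : ℂ) ≠ 0 := by exact_mod_cast Real.pi_ne_zero
  have hrc : (r : ℂ) ≠ 0 := by exact_mod_cast ne_of_gt hr
  have h1 : HasDerivAt (fun s : ℝ => Complex.exp (Complex.I * ω * s))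
      (Complex.I * ω * Complex.exp (Complex.I * ω * r)) r := by
    have hc : HasDerivAt (fun s : ℝ => (s : ℂ)) 1 r := by
      have := Complex.ofRealCLM.hasDerivAt (x := r); exact this
    have := ((hc.const_mul (Complex.I * ω)).cexp)
    simpa [mul_comm] using this
  have h2 : HasDerivAt (fun s : ℝ => (((4 * Real.pi * s)⁻¹ : ℝ) : ℂ))
      ((- (4 * Real.pi) / (4 * Real.pi * r) ^ 2 : ℝ) : ℂ) r := by
    have hd : HasDerivAt (fun s : ℝ => 4 * Real.pi * s) (4 * Real.pi) r := by
      simpa using (hasDerivAt_id r).const_mul (4 * Real.pi)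
    have hne : 4 * Real.pi * r ≠ 0 := by positivity
    have h3 : HasDerivAt (fun t : ℝ => (t : ℂ)) 1 ((4 * Real.pi * r)⁻¹) := by
      have := Complex.ofRealCLM.hasDerivAt (x := (4 * Real.pi * r)⁻¹); exact this
    have h4 := HasDerivAt.scomp r h3 (hd.inv hne)
    exact h4.congr_deriv (by push_cast; simp)
  have : HasDerivAt (hfun ω) _ r := h1.mul h2
  convert this using 1
  rw [hfun]
  push_cast
  field_simp
  ring

variable {E : Type*} [NormedAddCommGroup E] [InnerProductSpace ℝ E]

lemma hasFDerivAt_norm_ne {v : E} (hv : v ≠ 0) :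
    HasFDerivAt (fun z : E => ‖z‖) (innerSL ℝ (‖v‖⁻¹ • v)) v := by
  have h1 : HasFDerivAt (fun z : E => ‖z‖ ^ 2) (2 • innerSL ℝ v) v :=
    (hasStrictFDerivAt_norm_sq v).hasFDerivAt
  have h2 : HasFDerivAt (fun z : E => Real.sqrt (‖z‖ ^ 2))
      ((1 / (2 * Real.sqrt (‖v‖ ^ 2))) • (2 • innerSL ℝ v)) v :=
    h1.sqrt (pow_ne_zero 2 (norm_ne_zero_iff.mpr hv))
  have hnorm : (fun z : E => Real.sqrt (‖z‖ ^ 2)) = fun z : E => ‖z‖ := by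
    funext z; rw [Real.sqrt_sq (norm_nonneg z)]
  rw [hnorm] at h2
  convert h2 using 1
  rw [Real.sqrt_sq (norm_nonneg v)]
  ext u
  have : ‖v‖ ≠ 0 := norm_ne_zero_iff.mpr hv
  simp [real_inner_smul_left]
  field_simp

noncomputable def Fker (ω : ℝ) (ψ : E → ℂ) (x y : E) : ℂ := hfun ω ‖x - y‖ * ψ y

noncomputable def Fker' (ω : ℝ) (ψ : E → ℂ) (x y : E) : E →L[ℝ] ℂ :=
  (hfun ω ‖x - y‖ * (Complex.I * ω - ((‖x - y‖ : ℝ) : ℂ)⁻¹) * ψ y) •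
    ((innerSL ℝ (‖x - y‖⁻¹ • (x - y))).smulRight (1 : ℂ))

lemma Fker'_apply (ω : ℝ) (ψ : E → ℂ) (x y v : E) :
    Fker' ω ψ x y v =
      hfun ω ‖x - y‖ * (Complex.I * ω - ((‖x - y‖ : ℝ) : ℂ)⁻¹) * ψ y *
        ((inner ℝ (‖x - y‖⁻¹ • (x - y)) v : ℝ) : ℂ) := by
  simp only [Fker', ContinuousLinearMap.smul_apply, ContinuousLinearMap.smulRight_apply,
    innerSL_apply_apply, smul_eq_mul, mul_one, Complex.real_smul]

lemma norm_Fker'_le (ω : ℝ) (ψ : E → ℂ) (x y : E) (hω : 0 < ω) {δ B : ℝ} (hδ : 0 < δ)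
    (hr : δ ≤ ‖x - y‖) (hB : ‖ψ y‖ ≤ B) :
    ‖Fker' ω ψ x y‖ ≤ (4 * Real.pi * δ)⁻¹ * (ω + δ⁻¹) * B := by
  have hrpos : (0:ℝ) < ‖x - y‖ := lt_of_lt_of_le hδ hr
  have hrne : (x - y) ≠ 0 := by
    intro h; rw [h] at hrpos; simp at hrpos
  have hB0 : 0 ≤ B := le_trans (norm_nonneg _) hB
  rw [Fker']
  refine le_trans (ContinuousLinearMap.opNorm_smul_le _ _) ?_
  have h1 : ‖(innerSL ℝ (‖x - y‖⁻¹ • (x - y))).smulRight (1 : ℂ)‖ = 1 := by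
    rw [ContinuousLinearMap.norm_smulRight_apply, innerSL_apply_norm, norm_smul,
      norm_inv, norm_norm, inv_mul_cancel₀ (norm_ne_zero_iff.mpr hrne)]
    simp
  rw [h1, mul_one]
  have hb1 : ‖Complex.I * (ω:ℂ) - ((‖x - y‖ : ℝ) : ℂ)⁻¹‖ ≤ ω + ‖x - y‖⁻¹ := by
    calc ‖Complex.I * (ω:ℂ) - ((‖x - y‖ : ℝ) : ℂ)⁻¹‖ ≤ ‖Complex.I * (ω:ℂ)‖ + ‖(((‖x - y‖:ℝ)):ℂ)⁻¹‖ :=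
          norm_sub_le _ _
      _ = ω + ‖x - y‖⁻¹ := by
          rw [norm_mul, Complex.norm_I, one_mul, norm_inv, Complex.norm_real]
          simp [Real.norm_eq_abs, abs_of_pos hω, abs_of_pos hrpos]
  have h4 : (0:ℝ) ≤ (4 * Real.pi * ‖x - y‖)⁻¹ := by positivity
  have h2 : ‖hfun ω ‖x - y‖ * (Complex.I * ω - ((‖x - y‖ : ℝ) : ℂ)⁻¹) * ψ y‖
      ≤ (4 * Real.pi * ‖x - y‖)⁻¹ * (ω + ‖x - y‖⁻¹) * B := by
    rw [norm_mul, norm_mul, norm_hfun ω hrpos]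
    exact mul_le_mul (mul_le_mul_of_nonneg_left hb1 h4) hB (norm_nonneg _) (by positivity)
  refine h2.trans ?_
  have m1 : (4 * Real.pi * ‖x - y‖)⁻¹ ≤ (4 * Real.pi * δ)⁻¹ :=
    inv_anti₀ (by positivity) (by nlinarith [Real.pi_pos])
  have m2 : ‖x - y‖⁻¹ ≤ δ⁻¹ := inv_anti₀ hδ hr
  exact mul_le_mul (mul_le_mul m1 (by linarith) (by positivity) (by positivity)) le_rfl hB0
    (by positivity)

lemma Fker_hasFDerivAt (ω : ℝ) (ψ : E → ℂ) {x y : E} (hxy : x ≠ y) :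
    HasFDerivAt (fun x' => Fker ω ψ x' y) (Fker' ω ψ x y) x := by
  have hz : x - y ≠ 0 := sub_ne_zero.mpr hxy
  have hrpos : (0:ℝ) < ‖x - y‖ := norm_pos_iff.mpr hz
  have hg : HasFDerivAt (fun x' : E => ‖x' - y‖) (innerSL ℝ (‖x - y‖⁻¹ • (x - y))) x := by
    have := (hasFDerivAt_norm_ne hz).comp x ((hasFDerivAt_id x).sub_const y)
    exact this
  have hh := hfun_hasDerivAt ω hrpos
  have hcomp := hh.hasFDerivAt.comp x hg
  have : HasFDerivAt (fun x' => Fker ω ψ x' y) _ x := hcomp.mul_const (ψ y)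
  convert this using 1
  ext v
  rw [Fker'_apply]
  simp [smul_eq_mul, Complex.real_smul, real_inner_smul_left, inner_sub_left]
  ring

/-- The acoustic potential `w(x) = ∫ e^{iω‖x−y‖}/(4π‖x−y‖) ψ(y) dμ(y)` generated by a
finite measure supported in the ball of radius `M` and a bounded measurable density is
differentiable for `‖x‖ > M` and satisfies the Sommerfeld radiation condition
`lim_{|x|→∞} |x| (∂w/∂|x| − iω w) = 0`. -/
theorem potential_sommerfeld_radiation (ω M : ℝ) (hω : 0 < ω) (hM : 0 < M)
    (μ : Measure (EuclideanSpace ℝ (Fin 3))) [IsFiniteMeasure μ]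
    (hμsupp : μ (Metric.closedBall (0 : EuclideanSpace ℝ (Fin 3)) M)ᶜ = 0)
    (ψ : EuclideanSpace ℝ (Fin 3) → ℂ) (hψm : Measurable ψ)
    (hψb : Bornology.IsBounded (Set.range ψ))
    (w : EuclideanSpace ℝ (Fin 3) → ℂ)
    (hw : ∀ x : EuclideanSpace ℝ (Fin 3), M < ‖x‖ →
      w x = ∫ y, (Complex.exp (Complex.I * ((ω * ‖x - y‖ : ℝ) : ℂ)) /
        ((4 * Real.pi * ‖x - y‖ : ℝ) : ℂ)) * ψ y ∂μ) :
    (∀ x : EuclideanSpace ℝ (Fin 3), M < ‖x‖ → DifferentiableAt ℝ w x) ∧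
    ∀ ε : ℝ, 0 < ε → ∃ R : ℝ, 0 < R ∧
      ∀ x : EuclideanSpace ℝ (Fin 3), R ≤ ‖x‖ →
        ‖x‖ * ‖fderiv ℝ w x (‖x‖⁻¹ • x) - Complex.I * ((ω : ℝ) : ℂ) * w x‖ < ε := by
  classical
  obtain ⟨B₀, hB₀⟩ := isBounded_iff_forall_norm_le.mp hψb
  set B := max B₀ 0 with hBdef
  have hB0 : 0 ≤ B := le_max_right _ _
  have hB : ∀ y, ‖ψ y‖ ≤ B := fun y => le_trans (hB₀ _ ⟨y, rfl⟩) (le_max_left _ _)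
  have hae : ∀ᵐ y ∂μ, ‖y‖ ≤ M := by
    rw [MeasureTheory.ae_iff]
    refine measure_mono_null (fun y hy => ?_) hμsupp
    simp only [Set.mem_setOf_eq, not_le] at hy
    simp only [Set.mem_compl_iff, Metric.mem_closedBall, dist_eq_norm, sub_zero, not_le]
    linarith
  have hmr : ∀ x' : EuclideanSpace ℝ (Fin 3), Measurable fun y : EuclideanSpace ℝ (Fin 3) => ‖x' - y‖ :=
    fun x' => ((continuous_const.sub continuous_id).norm).measurable
  have hhm : Measurable (hfun ω) := by
    unfold hfun
    exact ((Complex.continuous_exp.comp (by continuity)).measurable).mul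
      (Complex.measurable_ofReal.comp ((measurable_const.mul measurable_id).inv))
  have hFmeas : ∀ x', AEStronglyMeasurable (fun y => Fker ω ψ x' y) μ := fun x' =>
    ((hhm.comp (hmr x')).mul hψm).aestronglyMeasurable
  have hF'meas : ∀ x', AEStronglyMeasurable (fun y => Fker' ω ψ x' y) μ := by
    intro x'
    have hc : Measurable fun y => hfun ω ‖x' - y‖ * (Complex.I * ω - ((‖x' - y‖ : ℝ) : ℂ)⁻¹) * ψ y := by
      apply Measurable.mul _ hψm
      apply (hhm.comp (hmr x')).mul
      apply Measurable.sub measurable_const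
      simp_rw [← Complex.ofReal_inv]
      exact Complex.measurable_ofReal.comp ((hmr x').inv)
    have hu : Measurable fun y => ‖x' - y‖⁻¹ • (x' - y) :=
      ((hmr x').inv).smul (measurable_const.sub measurable_id)
    have hcont : Continuous fun u : EuclideanSpace ℝ (Fin 3) => (innerSL ℝ u).smulRight (1 : ℂ) :=
      (((ContinuousLinearMap.smulRightL ℝ (EuclideanSpace ℝ (Fin 3)) ℂ).flip (1 : ℂ)).continuous).comp
        (innerSL ℝ).continuous
    have hT : StronglyMeasurable fun y => (innerSL ℝ (‖x' - y‖⁻¹ • (x' - y))).smulRight (1 : ℂ) :=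
      hcont.comp_stronglyMeasurable hu.stronglyMeasurable
    unfold Fker'
    exact ((hc.stronglyMeasurable.smul hT).aestronglyMeasurable)
  have hFint : ∀ x', M < ‖x'‖ → Integrable (fun y => Fker ω ψ x' y) μ := by
    intro x' hx'
    have hδ : 0 < ‖x'‖ - M := by linarith
    refine Integrable.mono' (integrable_const ((4 * Real.pi * (‖x'‖ - M))⁻¹ * B)) (hFmeas x') ?_
    filter_upwards [hae] with y hy
    have hr : ‖x'‖ - M ≤ ‖x' - y‖ := by linarith [norm_sub_norm_le x' y]
    have hrpos : 0 < ‖x' - y‖ := lt_of_lt_of_le hδ hr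
    rw [Fker, norm_mul, norm_hfun ω hrpos]
    exact mul_le_mul (inv_anti₀ (by positivity) (by nlinarith [Real.pi_pos])) (hB y)
      (norm_nonneg _) (by positivity)
  have hF'int : ∀ x', M < ‖x'‖ → Integrable (fun y => Fker' ω ψ x' y) μ := by
    intro x' hx'
    have hδ : 0 < ‖x'‖ - M := by linarith
    refine Integrable.mono'
      (integrable_const ((4 * Real.pi * (‖x'‖ - M))⁻¹ * (ω + (‖x'‖ - M)⁻¹) * B)) (hF'meas x') ?_
    filter_upwards [hae] with y hy
    exact norm_Fker'_le ω ψ x' y hω hδ (by linarith [norm_sub_norm_le x' y]) (hB y)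
  have key : ∀ x : EuclideanSpace ℝ (Fin 3), M < ‖x‖ →
      HasFDerivAt w (∫ y, Fker' ω ψ x y ∂μ) x := by
    intro x hx
    have hδ : 0 < (‖x‖ - M) / 2 := by linarith
    have hmain : HasFDerivAt (fun x' => ∫ y, Fker ω ψ x' y ∂μ) (∫ y, Fker' ω ψ x y ∂μ) x := by
      apply hasFDerivAt_integral_of_dominated_of_fderiv_le
        (bound := fun _ => (4 * Real.pi * ((‖x‖ - M) / 2))⁻¹ * (ω + ((‖x‖ - M) / 2)⁻¹) * B) (Metric.ball_mem_nhds x hδ)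
        (Filter.Eventually.of_forall fun x' => hFmeas x') (hFint x hx) (hF'meas x)
        ?_ (integrable_const _) ?_
      · filter_upwards [hae] with y hy
        intro x' hx'
        have h1 : ‖x - x'‖ < (‖x‖ - M) / 2 := by
          rw [Metric.mem_ball, dist_eq_norm] at hx'
          rw [norm_sub_rev]; exact hx'
        refine norm_Fker'_le ω ψ x' y hω hδ ?_ (hB y)
        have h2 := norm_sub_norm_le x x'
        have h3 := norm_sub_norm_le x' y
        linarith
      · filter_upwards [hae] with y hy
        intro x' hx'
        apply Fker_hasFDerivAt
        intro hxy
        have h1 : ‖x - x'‖ < (‖x‖ - M) / 2 := by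
          rw [Metric.mem_ball, dist_eq_norm] at hx'
          rw [norm_sub_rev]; exact hx'
        rw [hxy] at h1
        have h2 := norm_sub_norm_le x y
        linarith
    have hopen : IsOpen {z : EuclideanSpace ℝ (Fin 3) | M < ‖z‖} :=
      isOpen_lt continuous_const continuous_norm
    have hWw : (fun x' => ∫ y, Fker ω ψ x' y ∂μ) =ᶠ[nhds x] w := by
      filter_upwards [hopen.mem_nhds hx] with z hz
      rw [hw z hz]
      unfold Fker
      simp_rw [hfun_eq]
    exact hmain.congr_of_eventuallyEq hWw.symm
  refine ⟨fun x hx => (key x hx).differentiableAt, ?_⟩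
  intro ε hε
  set K := (μ Set.univ).toReal * B * (2 * ω * M + 1) / Real.pi with hK
  have hK0 : 0 ≤ K := by
    apply div_nonneg _ Real.pi_pos.le
    have : (0:ℝ) ≤ 2 * ω * M + 1 := by positivity
    exact mul_nonneg (mul_nonneg ENNReal.toReal_nonneg hB0) this
  refine ⟨max (2 * M + 1) (K / ε + 1), lt_of_lt_of_le (by linarith) (le_max_left _ _), ?_⟩
  intro x hxR
  have hx1 : 2 * M + 1 ≤ ‖x‖ := le_trans (le_max_left _ _) hxR
  have hxK : K / ε + 1 ≤ ‖x‖ := le_trans (le_max_right _ _) hxR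
  have hxM : M < ‖x‖ := by linarith
  have hx0 : 0 < ‖x‖ := by linarith
  have hfd : fderiv ℝ w x = ∫ y, Fker' ω ψ x y ∂μ := (key x hxM).fderiv
  have happ : fderiv ℝ w x (‖x‖⁻¹ • x) = ∫ y, Fker' ω ψ x y (‖x‖⁻¹ • x) ∂μ := by
    rw [hfd]; exact integral_apply (hF'int x hxM) _
  have hwx : w x = ∫ y, Fker ω ψ x y ∂μ := by
    rw [hw x hxM]; unfold Fker; simp_rw [hfun_eq]
  have hsub : fderiv ℝ w x (‖x‖⁻¹ • x) - Complex.I * ((ω : ℝ) : ℂ) * w x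
      = ∫ y, (Fker' ω ψ x y (‖x‖⁻¹ • x) - Complex.I * ω * Fker ω ψ x y) ∂μ := by
    rw [happ, hwx, ← integral_const_mul,
      ← integral_sub ((hF'int x hxM).apply_continuousLinearMap _) ((hFint x hxM).const_mul _)]
  set C' := B * (2 * ω * M + 1) / (Real.pi * ‖x‖ ^ 2) with hC'
  have hbound : ∀ᵐ y ∂μ,
      ‖Fker' ω ψ x y (‖x‖⁻¹ • x) - Complex.I * ω * Fker ω ψ x y‖ ≤ C' := by
    filter_upwards [hae] with y hy
    have hr2 : ‖x‖ - M ≤ ‖x - y‖ := by linarith [norm_sub_norm_le x y]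
    have hrhalf : ‖x‖ / 2 ≤ ‖x - y‖ := by linarith
    have hrpos : (0:ℝ) < ‖x - y‖ := by linarith
    have hrle : ‖x - y‖ ≤ ‖x‖ + M := by linarith [norm_sub_le x y]
    set t := (inner ℝ (‖x - y‖⁻¹ • (x - y)) (‖x‖⁻¹ • x) : ℝ) with htdef
    have hunorm : ‖(‖x - y‖⁻¹ • (x - y))‖ = 1 := by
      rw [norm_smul, norm_inv, norm_norm, inv_mul_cancel₀ hrpos.ne']
    have hvnorm : ‖(‖x‖⁻¹ • x)‖ = 1 := by
      rw [norm_smul, norm_inv, norm_norm, inv_mul_cancel₀ hx0.ne']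
    have ht1 : |t| ≤ 1 := by
      have h := abs_real_inner_le_norm (‖x - y‖⁻¹ • (x - y)) (‖x‖⁻¹ • x)
      rw [hunorm, hvnorm] at h; simpa using h
    have htle : t ≤ 1 := (abs_le.mp ht1).2
    have hts : t = ‖x - y‖⁻¹ * (‖x‖⁻¹ * (inner ℝ (x - y) x : ℝ)) := by
      rw [htdef, real_inner_smul_left, real_inner_smul_right]
    have hinner : ‖x‖ ^ 2 - M * ‖x‖ ≤ (inner ℝ (x - y) x : ℝ) := by
      have h1 : (inner ℝ (x - y) x : ℝ) = (inner ℝ x x : ℝ) - (inner ℝ y x : ℝ) := inner_sub_left x y x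
      have h2 : (inner ℝ y x : ℝ) ≤ M * ‖x‖ :=
        le_trans (real_inner_le_norm y x) (mul_le_mul_of_nonneg_right hy (norm_nonneg x))
      rw [h1, real_inner_self_eq_norm_sq]
      linarith
    have e1 : t * (‖x - y‖ * ‖x‖) = (inner ℝ (x - y) x : ℝ) := by
      rw [hts]; field_simp
    have e2 : (1 - t) * (‖x - y‖ * ‖x‖) ≤ 2 * M * ‖x‖ := by
      nlinarith [mul_le_mul_of_nonneg_right hrle hx0.le]
    have h1t : 1 - t ≤ 4 * M / ‖x‖ := by
      rw [le_div_iff₀ hx0]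
      nlinarith [mul_le_mul_of_nonneg_left hrhalf (mul_nonneg (by linarith : (0:ℝ) ≤ 1 - t) hx0.le)]
    have hE : Fker' ω ψ x y (‖x‖⁻¹ • x) - Complex.I * ω * Fker ω ψ x y
        = hfun ω ‖x - y‖ * ψ y *
          ((Complex.I * ω - ((‖x - y‖ : ℝ) : ℂ)⁻¹) * (t : ℂ) - Complex.I * ω) := by
      rw [Fker'_apply]; unfold Fker; rw [← htdef]; ring
    have hN : ‖(Complex.I * (ω:ℂ) - ((‖x - y‖ : ℝ) : ℂ)⁻¹) * (t : ℂ) - Complex.I * ω‖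
        ≤ ω * (4 * M / ‖x‖) + 2 / ‖x‖ := by
      have heq : (Complex.I * (ω:ℂ) - ((‖x - y‖ : ℝ) : ℂ)⁻¹) * (t : ℂ) - Complex.I * ω
          = Complex.I * ω * ((t - 1 : ℝ) : ℂ) - ((t * ‖x - y‖⁻¹ : ℝ) : ℂ) := by
        push_cast; ring
      rw [heq]
      refine le_trans (norm_sub_le _ _) ?_
      have n1 : ‖Complex.I * (ω:ℂ) * ((t - 1 : ℝ) : ℂ)‖ ≤ ω * (4 * M / ‖x‖) := by
        rw [norm_mul, norm_mul, Complex.norm_I, one_mul, Complex.norm_real, Complex.norm_real,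
          Real.norm_eq_abs, Real.norm_eq_abs, abs_of_pos hω]
        have habs : |t - 1| ≤ 4 * M / ‖x‖ := by
          rw [abs_of_nonpos (by linarith)]
          linarith
        exact mul_le_mul_of_nonneg_left habs hω.le
      have n2 : ‖((t * ‖x - y‖⁻¹ : ℝ) : ℂ)‖ ≤ 2 / ‖x‖ := by
        rw [Complex.norm_real, Real.norm_eq_abs, abs_mul, abs_inv, abs_of_pos hrpos]
        calc |t| * ‖x - y‖⁻¹ ≤ 1 * (‖x‖ / 2)⁻¹ :=
              mul_le_mul ht1 (inv_anti₀ (by linarith) hrhalf) (by positivity) zero_le_one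
          _ = 2 / ‖x‖ := by rw [one_mul, inv_div]
      linarith
    calc ‖Fker' ω ψ x y (‖x‖⁻¹ • x) - Complex.I * ω * Fker ω ψ x y‖
        = ‖hfun ω ‖x - y‖‖ * ‖ψ y‖ *
          ‖(Complex.I * ω - ((‖x - y‖ : ℝ) : ℂ)⁻¹) * (t : ℂ) - Complex.I * ω‖ := by
          rw [hE, norm_mul, norm_mul]
      _ ≤ (4 * Real.pi * (‖x‖ / 2))⁻¹ * B * (ω * (4 * M / ‖x‖) + 2 / ‖x‖) := by
          refine mul_le_mul (mul_le_mul ?_ (hB y) (norm_nonneg _) (by positivity)) hN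
            (norm_nonneg _) (mul_nonneg (by positivity) hB0)
          rw [norm_hfun ω hrpos]
          exact inv_anti₀ (by positivity) (by nlinarith [Real.pi_pos])
      _ = C' := by
          rw [hC']; field_simp [Real.pi_ne_zero, hx0.ne']; ring
  have hIle : ‖∫ y, (Fker' ω ψ x y (‖x‖⁻¹ • x) - Complex.I * ω * Fker ω ψ x y) ∂μ‖
      ≤ (μ Set.univ).toReal * C' := by
    refine le_trans (norm_integral_le_of_norm_le (integrable_const C') hbound) ?_
    rw [integral_const, smul_eq_mul, Measure.real]
  rw [hsub]
  calc ‖x‖ * ‖∫ y, (Fker' ω ψ x y (‖x‖⁻¹ • x) - Complex.I * ω * Fker ω ψ x y) ∂μ‖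
      ≤ ‖x‖ * ((μ Set.univ).toReal * C') := mul_le_mul_of_nonneg_left hIle hx0.le
    _ = K / ‖x‖ := by
        rw [hC', hK]; field_simp [Real.pi_ne_zero, hx0.ne']
    _ < ε := by
        rw [div_lt_iff₀ hx0]
        have hKx : K / ε < ‖x‖ := by linarith
        calc K = K / ε * ε := by field_simp
          _ < ‖x‖ * ε := mul_lt_mul_of_pos_right hKx hε
          _ = ε * ‖x‖ := mul_comm _ _
end
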